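/- arXiv:0810.4627 — 5 statements merged into one kernel-verified Lean document; each statement's English description precedes it below -/
import Mathlib

section
/- If X is a shift of finite type and φ : X → Y is an open factor (surjective) code onto a shift space Y, then Y is a shift of finite type. -/
open Set Function Filter

variable {A : Type*} {B : Type*} {C : Type*}

/-- The shift map on the full shift. -/
def shiftMap (x : ℤ → A) : ℤ → A := fun i => x (i + 1)

/-- A shift space (subshift): a closed shift-invariant subset of the full shift. -/
def IsSubshift [TopologicalSpace A] (X : Set (ℤ → A)) : Prop :=
  IsClosed X ∧ shiftMap '' X = X

/-- The word `w` occurs in `x` at position `k`. -/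
def OccursAt (x : ℤ → A) (k : ℤ) (w : List A) : Prop :=
  ∀ i : Fin w.length, x (k + ((i : ℕ) : ℤ)) = w.get i

/-- The word `w` belongs to the language of `X`. -/
def WordIn (X : Set (ℤ → A)) (w : List A) : Prop :=
  ∃ x ∈ X, ∃ k : ℤ, OccursAt x k w

/-- Irreducibility of a shift space. -/
def IrreducibleSubshift (X : Set (ℤ → A)) : Prop :=
  ∀ u v : List A, WordIn X u → WordIn X v → ∃ w : List A, WordIn X (u ++ w ++ v)

/-- Nonwandering shift space. -/
def NonwanderingSubshift (X : Set (ℤ → A)) : Prop :=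
  ∀ u : List A, WordIn X u → ∃ w : List A, WordIn X (u ++ w ++ u)

/-- A shift of finite type: defined by a finite set of forbidden words. -/
def IsSFT (X : Set (ℤ → A)) : Prop :=
  ∃ F : Finset (List A), X = {x : ℤ → A | ∀ w ∈ F, ∀ k : ℤ, ¬ OccursAt x k w}

/-- A (sliding block) code: a continuous shift-commuting map between shift spaces. -/
def IsCode [TopologicalSpace A] [TopologicalSpace B]
    {X : Set (ℤ → A)} {Y : Set (ℤ → B)} (φ : X → Y) : Prop :=
  Continuous φ ∧
    ∀ (x : X) (hx : shiftMap (x : ℤ → A) ∈ X),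
      ((φ ⟨shiftMap (x : ℤ → A), hx⟩ : Y) : ℤ → B) = shiftMap ((φ x : Y) : ℤ → B)

/-- A sofic shift: a factor of a shift of finite type. -/
def IsSofic [TopologicalSpace A] (Y : Set (ℤ → A)) : Prop :=
  ∃ (n : ℕ) (Z : Set (ℤ → Fin n)), IsSubshift Z ∧ IsSFT Z ∧
    ∃ ψ : Z → Y, IsCode ψ ∧ Function.Surjective ψ

/-- Two points are left asymptotic if they agree on all sufficiently negative coordinates. -/
def LeftAsymptotic (x y : ℤ → A) : Prop := ∃ N : ℤ, ∀ i ≤ N, x i = y i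

/-- Two points are right asymptotic if they agree on all sufficiently positive coordinates. -/
def RightAsymptotic (x y : ℤ → A) : Prop := ∃ N : ℤ, ∀ i, N ≤ i → x i = y i

/-- A code is right closing if it never collapses two distinct left asymptotic points. -/
def RightClosing {X : Set (ℤ → A)} {Y : Set (ℤ → B)} (φ : X → Y) : Prop :=
  ∀ x x' : X, LeftAsymptotic (x : ℤ → A) (x' : ℤ → A) → φ x = φ x' → x = x'

/-- A code is left closing if it never collapses two distinct right asymptotic points. -/
def LeftClosing {X : Set (ℤ → A)} {Y : Set (ℤ → B)} (φ : X → Y) : Prop :=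
  ∀ x x' : X, RightAsymptotic (x : ℤ → A) (x' : ℤ → A) → φ x = φ x' → x = x'

/-- Bi-closing: both right and left closing. -/
def BiClosing {X : Set (ℤ → A)} {Y : Set (ℤ → B)} (φ : X → Y) : Prop :=
  RightClosing φ ∧ LeftClosing φ

/-- Finite-to-one map. -/
def FiniteToOne {α β : Type*} (φ : α → β) : Prop := ∀ y : β, (φ ⁻¹' {y}).Finite

/-- Every fiber has exactly `d` elements. -/
def ExactlyDToOne {α β : Type*} (φ : α → β) (d : ℕ) : Prop :=
  ∀ y : β, (φ ⁻¹' {y}).Finite ∧ Nat.card (φ ⁻¹' {y}) = d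

/-- Constant-to-one map. -/
def ConstantToOne {α β : Type*} (φ : α → β) : Prop := ∃ d : ℕ, ExactlyDToOne φ d

/-- A doubly transitive point: every word of `Y` occurs infinitely often to the left
and to the right. -/
def DoublyTransitive (Y : Set (ℤ → A)) (y : ℤ → A) : Prop :=
  ∀ w : List A, WordIn Y w → ∀ N : ℤ,
    (∃ k ≥ N, OccursAt y k w) ∧ (∃ k ≤ N, OccursAt y k w)

/-- The maximal nonwandering subshift of `X`. -/
def OmegaSet [TopologicalSpace A] (X : Set (ℤ → A)) : Set (ℤ → A) :=
  ⋃₀ {Z : Set (ℤ → A) | Z ⊆ X ∧ IsSubshift Z ∧ NonwanderingSubshift Z}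

/-- Topological entropy of a subshift, via the growth rate of the number of words. -/
noncomputable def subshiftEntropy (X : Set (ℤ → A)) : ℝ :=
  Filter.limsup
    (fun n : ℕ => Real.log (Nat.card {w : List A | w.length = n ∧ WordIn X w}) / n)
    Filter.atTop

/-- An irreducible component of `X`: a maximal nonempty irreducible subshift of `X`. -/
def IsIrreducibleComponent [TopologicalSpace A] (X X₀ : Set (ℤ → A)) : Prop :=
  X₀ ⊆ X ∧ IsSubshift X₀ ∧ X₀.Nonempty ∧ IrreducibleSubshift X₀ ∧
    ∀ Z : Set (ℤ → A), Z ⊆ X → IsSubshift Z → IrreducibleSubshift Z → X₀ ⊆ Z → Z = X₀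

-- The metric on a shift space: `d(x,y) = 2^{-k}` where `k` is maximal with
-- `x` and `y` agreeing on `[-k,k]`, and `0` if `x = y`.
open Classical in
noncomputable def shiftDist (x y : ℤ → A) : ℝ :=
  if x = y then 0
  else (2 : ℝ) ^ (-((sSup {n : ℕ | ∀ i : ℤ, |i| ≤ (n : ℤ) → x i = y i} : ℕ) : ℤ))


section AuxShift
variable {A : Type*} {B : Type*}

def shiftZ (n : ℤ) (x : ℤ → A) : ℤ → A := fun i => x (i + n)

lemma shiftZ_shiftZ (a b : ℤ) (x : ℤ → A) : shiftZ a (shiftZ b x) = shiftZ (a + b) x := by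
  funext i; simp [shiftZ, add_assoc]

lemma shiftZ_zero (x : ℤ → A) : shiftZ 0 x = x := by funext i; simp [shiftZ]

lemma shiftMap_eq_shiftZ (x : ℤ → A) : shiftMap x = shiftZ 1 x := rfl

lemma shiftZ_neg_one_shiftMap (x : ℤ → A) : shiftZ (-1) (shiftMap x) = x := by
  funext i; simp [shiftZ, shiftMap]

lemma IsSubshift.shiftZ_mem [TopologicalSpace A] {X : Set (ℤ → A)} (h : IsSubshift X)
    (n : ℤ) {x : ℤ → A} (hx : x ∈ X) : shiftZ n x ∈ X := by
  have h1 : ∀ x ∈ X, shiftZ 1 x ∈ X := by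
    intro x hx
    have : shiftZ 1 x ∈ shiftMap '' X := ⟨x, hx, rfl⟩
    rwa [h.2] at this
  have hm1 : ∀ x ∈ X, shiftZ (-1) x ∈ X := by
    intro x hx
    rw [← h.2] at hx
    obtain ⟨u, hu, rfl⟩ := hx
    rwa [shiftZ_neg_one_shiftMap]
  induction n using Int.induction_on with
  | zero => rwa [shiftZ_zero]
  | succ k ih =>
      have := h1 _ ih
      rwa [shiftZ_shiftZ, add_comm] at this
  | pred k ih =>
      have h2 := hm1 _ ih
      rw [shiftZ_shiftZ] at h2
      have e : (-1 + -(k:ℤ)) = (-(k:ℤ) - 1) := by ring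
      rwa [e] at h2

lemma code_shiftZ [TopologicalSpace A] [TopologicalSpace B] {X : Set (ℤ → A)} {Y : Set (ℤ → B)}
    (hX : IsSubshift X) {φ : X → Y} (hφ : IsCode φ) (n : ℤ) (x : X)
    (h : shiftZ n (x : ℤ → A) ∈ X) :
    ((φ ⟨shiftZ n (x : ℤ → A), h⟩ : Y) : ℤ → B) = shiftZ n ((φ x : Y) : ℤ → B) := by
  induction n using Int.induction_on with
  | zero =>
      have hx : shiftZ 0 (x : ℤ → A) = (x : ℤ → A) := shiftZ_zero _
      have : (⟨shiftZ 0 (x : ℤ → A), h⟩ : X) = x := Subtype.ext hx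
      rw [this, shiftZ_zero]
  | succ k ih =>
      have hz : shiftZ (k : ℤ) (x : ℤ → A) ∈ X := hX.shiftZ_mem _ x.2
      have hcar : shiftZ ((k : ℤ) + 1) (x : ℤ → A) = shiftMap (shiftZ k (x : ℤ → A)) := by
        funext i; simp [shiftZ, shiftMap]; ring_nf
      have hmem : shiftMap ((⟨shiftZ k (x : ℤ → A), hz⟩ : X) : ℤ → A) ∈ X := by
        simpa [← hcar] using h
      have h2 := hφ.2 ⟨shiftZ k (x : ℤ → A), hz⟩ hmem
      have : (⟨shiftZ ((k : ℤ) + 1) (x : ℤ → A), h⟩ : X)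
          = ⟨shiftMap ((⟨shiftZ k (x : ℤ → A), hz⟩ : X) : ℤ → A), hmem⟩ := Subtype.ext hcar
      rw [this, h2, ih hz, shiftMap_eq_shiftZ, shiftZ_shiftZ]
      congr 1
      ring
  | pred k ih =>
      have hz : shiftZ (-(k : ℤ) - 1) (x : ℤ → A) ∈ X := h
      have hcar : shiftMap (shiftZ (-(k : ℤ) - 1) (x : ℤ → A)) = shiftZ (-(k : ℤ)) (x : ℤ → A) := by
        funext i; simp [shiftZ, shiftMap]
      have hmem : shiftMap ((⟨shiftZ (-(k : ℤ) - 1) (x : ℤ → A), hz⟩ : X) : ℤ → A) ∈ X := by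
        rw [hcar]; exact hX.shiftZ_mem _ x.2
      have h2 := hφ.2 ⟨shiftZ (-(k : ℤ) - 1) (x : ℤ → A), hz⟩ hmem
      have hmem' : shiftZ (-(k : ℤ)) (x : ℤ → A) ∈ X := by rw [← hcar]; exact hmem
      have h3 : (⟨shiftMap ((⟨shiftZ (-(k : ℤ) - 1) (x : ℤ → A), hz⟩ : X) : ℤ → A), hmem⟩ : X)
          = ⟨shiftZ (-(k : ℤ)) (x : ℤ → A), hmem'⟩ := Subtype.ext hcar
      rw [h3, ih hmem'] at h2
      have h4 := congrArg (shiftZ (-1)) h2.symm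
      rw [shiftZ_neg_one_shiftMap, shiftZ_shiftZ] at h4
      rw [h4]
      congr 1
      ring

end AuxShift

section AuxTop
variable {A : Type*} {B : Type*}

lemma isOpen_cyl [TopologicalSpace A] [DiscreteTopology A] (x : ℤ → A) (n : ℕ) :
    IsOpen {z : ℤ → A | ∀ i : ℤ, |i| ≤ (n : ℤ) → z i = x i} := by
  have h : {z : ℤ → A | ∀ i : ℤ, |i| ≤ (n : ℤ) → z i = x i} =
      ⋂ i ∈ Finset.Icc (-(n : ℤ)) (n : ℤ), {z : ℤ → A | z i = x i} := by
    ext z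
    simp [abs_le, Finset.mem_Icc, and_imp]
  rw [h]
  refine isOpen_biInter_finset fun i _ => ?_
  have : {z : ℤ → A | z i = x i} = (fun z : ℤ → A => z i) ⁻¹' {x i} := by
    ext z; simp
  rw [this]
  exact (isOpen_discrete {x i}).preimage (continuous_apply i)

/-- From an open set in a subspace of a product of discrete spaces, extract a cylinder. -/
lemma cyl_subset_of_isOpen [TopologicalSpace B] [DiscreteTopology B] {Y : Set (ℤ → B)}
    {W : Set (↥Y)} (hW : IsOpen W) {y₀ : ↥Y} (hy₀ : y₀ ∈ W) :
    ∃ n : ℕ, ∀ y : ↥Y, (∀ i : ℤ, |i| ≤ (n : ℤ) → (y : ℤ → B) i = (y₀ : ℤ → B) i) → y ∈ W := by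
  obtain ⟨O, hO, rfl⟩ := isOpen_induced_iff.mp hW
  obtain ⟨I, u, hu, hsub⟩ := isOpen_pi_iff.mp hO _ hy₀
  refine ⟨I.sup Int.natAbs, fun y hy => ?_⟩
  have : (y : ℤ → B) ∈ (↑I : Set ℤ).pi u := by
    intro i hi
    have hle : |i| ≤ ((I.sup Int.natAbs : ℕ) : ℤ) := by
      rw [Int.abs_eq_natAbs]
      exact_mod_cast Finset.le_sup (f := Int.natAbs) hi
    rw [hy i hle]
    exact (hu i hi).2
  exact hsub this

end AuxTop

section AuxRadius
variable {A : Type*} {B : Type*}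

lemma exists_radius [Finite A] [TopologicalSpace A] [DiscreteTopology A]
    [TopologicalSpace B] [DiscreteTopology B]
    {X : Set (ℤ → A)} {Y : Set (ℤ → B)} (hXc : IsClosed X) (φ : ↥X → ↥Y)
    (hcont : Continuous φ) :
    ∃ r : ℕ, ∀ x x' : ↥X,
      (∀ i : ℤ, |i| ≤ (r : ℤ) → (x : ℤ → A) i = (x' : ℤ → A) i) →
      ((φ x : ℤ → B)) 0 = ((φ x' : ℤ → B)) 0 := by
  classical
  set ψ : ↥X → B := fun x => (φ x : ℤ → B) 0 with hψ
  have hψc : Continuous ψ := (continuous_apply 0).comp (continuous_subtype_val.comp hcont)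
  -- for each x, an ambient cylinder radius on which ψ is constant
  have key : ∀ x : ↥X, ∃ n : ℕ, ∀ x'' : ↥X,
      (∀ i : ℤ, |i| ≤ (n : ℤ) → (x'' : ℤ → A) i = (x : ℤ → A) i) → ψ x'' = ψ x := by
    intro x
    have hopen : IsOpen (ψ ⁻¹' {ψ x}) := (isOpen_discrete _).preimage hψc
    obtain ⟨n, hn⟩ := cyl_subset_of_isOpen (Y := X) hopen (y₀ := x) rfl
    exact ⟨n, fun x'' h => hn x'' h⟩
  choose n hn using key
  have hXcomp : IsCompact X := hXc.isCompact
  have hcover : X ⊆ ⋃ x : ↥X, {z : ℤ → A | ∀ i : ℤ, |i| ≤ ((n x : ℕ) : ℤ) → z i = (x : ℤ → A) i} := by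
    intro z hz
    exact Set.mem_iUnion.mpr ⟨⟨z, hz⟩, fun i _ => rfl⟩
  obtain ⟨t, ht⟩ := hXcomp.elim_finite_subcover _ (fun x => isOpen_cyl _ (n x)) hcover
  refine ⟨t.sup n, fun x x' hagree => ?_⟩
  have hmem := ht x.2
  rw [Set.mem_iUnion₂] at hmem
  obtain ⟨x₀, hx₀t, hx₀⟩ := hmem
  have hx' : ∀ i : ℤ, |i| ≤ ((n x₀ : ℕ) : ℤ) → (x' : ℤ → A) i = (x₀ : ℤ → A) i := by
    intro i hi
    have hle : |i| ≤ ((t.sup n : ℕ) : ℤ) :=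
      le_trans hi (by exact_mod_cast Finset.le_sup hx₀t)
    rw [← hagree i hle]
    exact hx₀ i hi

  have e1 := hn x₀ x hx₀
  have e2 := hn x₀ x' hx'
  show ψ x = ψ x'
  rw [e1, e2]

lemma radius_coord [Finite A] [TopologicalSpace A] [DiscreteTopology A]
    [TopologicalSpace B] [DiscreteTopology B]
    {X : Set (ℤ → A)} {Y : Set (ℤ → B)} (hX : IsSubshift X) {φ : ↥X → ↥Y}
    (hφ : IsCode φ) {r : ℕ}
    (hr : ∀ x x' : ↥X,
      (∀ i : ℤ, |i| ≤ (r : ℤ) → (x : ℤ → A) i = (x' : ℤ → A) i) →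
      ((φ x : ℤ → B)) 0 = ((φ x' : ℤ → B)) 0)
    (k : ℤ) (x x' : ↥X)
    (h : ∀ i : ℤ, |i - k| ≤ (r : ℤ) → (x : ℤ → A) i = (x' : ℤ → A) i) :
    ((φ x : ℤ → B)) k = ((φ x' : ℤ → B)) k := by
  have hm : shiftZ k (x : ℤ → A) ∈ X := hX.shiftZ_mem _ x.2
  have hm' : shiftZ k (x' : ℤ → A) ∈ X := hX.shiftZ_mem _ x'.2
  have hag : ∀ i : ℤ, |i| ≤ (r : ℤ) →
      (shiftZ k (x : ℤ → A)) i = (shiftZ k (x' : ℤ → A)) i := by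
    intro i hi
    have : |(i + k) - k| ≤ (r : ℤ) := by simpa using hi
    exact h (i + k) this
  have := hr ⟨_, hm⟩ ⟨_, hm'⟩ hag
  rw [code_shiftZ hX hφ k x hm, code_shiftZ hX hφ k x' hm'] at this
  simpa [shiftZ] using this
end AuxRadius

section AuxOpen
variable {A : Type*} {B : Type*}

lemma uniform_open [Finite A] [TopologicalSpace A] [DiscreteTopology A]
    [TopologicalSpace B] [DiscreteTopology B]
    {X : Set (ℤ → A)} {Y : Set (ℤ → B)} (hX : IsSubshift X) {φ : ↥X → ↥Y}
    (hφ : IsCode φ) (hopen : IsOpenMap φ) (M : ℕ) :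
    ∃ m : ℕ, M ≤ m ∧ ∀ (x : ↥X) (y : ℤ → B), y ∈ Y →
      (∀ i : ℤ, |i| ≤ (m : ℤ) → y i = (φ x : ℤ → B) i) →
      ∃ x' : ↥X, ((φ x' : ℤ → B)) = y ∧
        ∀ i : ℤ, |i| ≤ (M : ℤ) → (x' : ℤ → A) i = (x : ℤ → A) i := by
  classical
  obtain ⟨r, hr⟩ := exists_radius hX.1 φ hφ.1
  set U : ↥X → Set ↥X :=
    fun x => {x' : ↥X | ∀ i : ℤ, |i| ≤ (M : ℤ) → (x' : ℤ → A) i = (x : ℤ → A) i} with hU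
  have hUopen : ∀ x, IsOpen (U x) := fun x =>
    (isOpen_cyl (x : ℤ → A) M).preimage continuous_subtype_val
  have hUmem : ∀ x, x ∈ U x := fun x i _ => rfl
  have key : ∀ x : ↥X, ∃ mx : ℕ, M ≤ mx ∧ ∀ y : ↥Y,
      (∀ i : ℤ, |i| ≤ (mx : ℤ) → (y : ℤ → B) i = (φ x : ℤ → B) i) → y ∈ φ '' (U x) := by
    intro x
    have himg : IsOpen (φ '' (U x)) := hopen _ (hUopen x)
    have hmemimg : φ x ∈ φ '' (U x) := ⟨x, hUmem x, rfl⟩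
    obtain ⟨n, hn⟩ := cyl_subset_of_isOpen himg hmemimg
    refine ⟨max n M, le_max_right _ _, fun y hy => ?_⟩
    refine hn y fun i hi => hy i ?_
    exact le_trans hi (by exact_mod_cast le_max_left n M)
  choose mx hmxM hmx using key
  have hXcomp : IsCompact X := hX.1.isCompact
  have hcover : X ⊆ ⋃ x : ↥X,
      {z : ℤ → A | ∀ i : ℤ, |i| ≤ ((mx x + r : ℕ) : ℤ) → z i = (x : ℤ → A) i} := by
    intro z hz
    exact Set.mem_iUnion.mpr ⟨⟨z, hz⟩, fun i _ => rfl⟩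
  obtain ⟨t, ht⟩ := hXcomp.elim_finite_subcover _ (fun x => isOpen_cyl _ (mx x + r)) hcover
  refine ⟨t.sup (fun x => mx x + r) + M, Nat.le_add_left _ _, ?_⟩
  intro x'' y hy hagr
  have hmem := ht x''.2
  rw [Set.mem_iUnion₂] at hmem
  obtain ⟨x₀, hx₀t, hx₀⟩ := hmem
  have hx₀' : ∀ i : ℤ, |i| ≤ ((mx x₀ + r : ℕ) : ℤ) → (x'' : ℤ → A) i = (x₀ : ℤ → A) i := hx₀
  have hsup : ((mx x₀ + r : ℕ) : ℤ) ≤ ((t.sup (fun x => mx x + r) + M : ℕ) : ℤ) := by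
    exact_mod_cast le_trans (Finset.le_sup (f := fun x => mx x + r) hx₀t) (Nat.le_add_right _ _)
  have step1 : ∀ k : ℤ, |k| ≤ ((mx x₀ : ℕ) : ℤ) →
      ((φ x'' : ℤ → B)) k = ((φ x₀ : ℤ → B)) k := by
    intro k hk
    refine radius_coord hX hφ hr k x'' x₀ fun i hi => ?_
    refine hx₀' i ?_
    calc |i| = |i - k + k| := by ring_nf
    _ ≤ |i - k| + |k| := abs_add_le _ _
    _ ≤ (r : ℤ) + (mx x₀ : ℤ) := add_le_add hi hk
    _ = ((mx x₀ + r : ℕ) : ℤ) := by push_cast; ring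
  have step2 : ∀ i : ℤ, |i| ≤ ((mx x₀ : ℕ) : ℤ) → y i = ((φ x₀ : ℤ → B)) i := by
    intro i hi
    have h1 : |i| ≤ ((t.sup (fun x => mx x + r) + M : ℕ) : ℤ) :=
      le_trans hi (le_trans (by exact_mod_cast Nat.le_add_right _ _) hsup)
    rw [hagr i h1]
    exact step1 i hi
  obtain ⟨x', hx'U, hφx'⟩ := hmx x₀ ⟨y, hy⟩ step2
  refine ⟨x', congrArg Subtype.val hφx', fun i hi => ?_⟩
  have h1 : (x' : ℤ → A) i = (x₀ : ℤ → A) i := hx'U i hi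
  have h2 : (x'' : ℤ → A) i = (x₀ : ℤ → A) i := by
    refine hx₀' i (le_trans hi ?_)
    have : M ≤ mx x₀ + r := le_trans (hmxM x₀) (Nat.le_add_right _ _)
    exact_mod_cast this
  rw [h1, h2]
end AuxOpen

section AuxMore
variable {A : Type*} {B : Type*}

lemma uniform_open_center [TopologicalSpace A] [TopologicalSpace B]
    {X : Set (ℤ → A)} {Y : Set (ℤ → B)} (hX : IsSubshift X) (hY : IsSubshift Y)
    {φ : ↥X → ↥Y} (hφ : IsCode φ) {m M : ℕ}
    (hm : ∀ (x : ↥X) (y : ℤ → B), y ∈ Y →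
      (∀ i : ℤ, |i| ≤ (m : ℤ) → y i = (φ x : ℤ → B) i) →
      ∃ x' : ↥X, ((φ x' : ℤ → B)) = y ∧
        ∀ i : ℤ, |i| ≤ (M : ℤ) → (x' : ℤ → A) i = (x : ℤ → A) i)
    (c : ℤ) (x : ↥X) (z : ℤ → B) (hz : z ∈ Y)
    (hagr : ∀ i : ℤ, |i - c| ≤ (m : ℤ) → z i = (φ x : ℤ → B) i) :
    ∃ x' : ↥X, ((φ x' : ℤ → B)) = z ∧
      ∀ i : ℤ, |i - c| ≤ (M : ℤ) → (x' : ℤ → A) i = (x : ℤ → A) i := by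
  have hxc : shiftZ c (x : ℤ → A) ∈ X := hX.shiftZ_mem c x.2
  set xc : ↥X := ⟨shiftZ c (x : ℤ → A), hxc⟩ with hxcdef
  have hzc : shiftZ c z ∈ Y := hY.shiftZ_mem c hz
  have hagrc : ∀ i : ℤ, |i| ≤ (m : ℤ) → (shiftZ c z) i = (φ xc : ℤ → B) i := by
    intro i hi
    have hcode := code_shiftZ hX hφ c x hxc
    rw [hxcdef]
    rw [hcode]
    show z (i + c) = (φ x : ℤ → B) (i + c)
    refine hagr (i + c) (by simpa using hi)
  obtain ⟨x₀, hφx₀, hx₀⟩ := hm xc (shiftZ c z) hzc hagrc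
  have hx' : shiftZ (-c) (x₀ : ℤ → A) ∈ X := hX.shiftZ_mem (-c) x₀.2
  refine ⟨⟨shiftZ (-c) (x₀ : ℤ → A), hx'⟩, ?_, ?_⟩
  · have hcode := code_shiftZ hX hφ (-c) x₀ hx'
    rw [hcode, hφx₀, shiftZ_shiftZ]
    simp [shiftZ_zero]
  · intro i hi
    show (x₀ : ℤ → A) (i + -c) = (x : ℤ → A) i
    have h1 : (x₀ : ℤ → A) (i + -c) = (xc : ℤ → A) (i + -c) := by
      refine hx₀ (i + -c) ?_
      simpa [sub_eq_add_neg] using hi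
    rw [h1]
    show (x : ℤ → A) (i + -c + c) = (x : ℤ → A) i
    congr 1
    ring

lemma splice_avoids {F : Finset (List A)} {M : ℕ} (hM : ∀ w ∈ F, w.length ≤ M)
    {x x' : ℤ → A}
    (hx : ∀ w ∈ F, ∀ k : ℤ, ¬ OccursAt x k w)
    (hx' : ∀ w ∈ F, ∀ k : ℤ, ¬ OccursAt x' k w)
    (c : ℤ) (hagree : ∀ i : ℤ, c ≤ i → i ≤ c + M → x i = x' i) :
    ∀ w ∈ F, ∀ k : ℤ, ¬ OccursAt (fun i => if i ≤ c then x i else x' i) k w := by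
  intro w hw k hocc
  by_cases hk : k ≤ c
  · refine hx w hw k (fun i => ?_)
    rw [← hocc i]
    by_cases hic : k + (i : ℤ) ≤ c
    · simp [hic]
    · have h1 : c ≤ k + (i : ℤ) := le_of_not_ge hic
      have h2 : k + (i : ℤ) ≤ c + M := by
        have : (i : ℤ) ≤ (w.length : ℤ) - 1 := by
          have := i.2
          omega
        have hlen : (w.length : ℤ) ≤ (M : ℤ) := by exact_mod_cast hM w hw
        omega
      simp only [hic, if_false]
      exact hagree _ h1 h2
  · refine hx' w hw k (fun i => ?_)
    rw [← hocc i]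
    have h1 : ¬ (k + (i : ℤ) ≤ c) := by
      have : (0 : ℤ) ≤ (i : ℤ) := Int.ofNat_nonneg _
      omega
    simp [h1]

/-- extract a point of Y agreeing with y on [a, a + N - 1] from a window in the language -/
lemma window_point [TopologicalSpace B] {Y : Set (ℤ → B)} (hY : IsSubshift Y)
    {y : ℤ → B} {N : ℕ} {a : ℤ}
    (hw : WordIn Y (List.ofFn (fun i : Fin N => y (a + (i : ℕ))))) :
    ∃ z ∈ Y, ∀ i : ℤ, a ≤ i → i < a + N → z i = y i := by
  obtain ⟨x₀, hx₀, l, hocc⟩ := hw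
  refine ⟨shiftZ (l - a) x₀, hY.shiftZ_mem _ hx₀, fun i hai hiN => ?_⟩
  have hj : (i - a).toNat < N := by omega
  have hji : ((i - a).toNat : ℤ) = i - a := Int.toNat_of_nonneg (by omega)
  have hlen : (List.ofFn (fun i : Fin N => y (a + (i : ℕ)))).length = N := List.length_ofFn
  have := hocc ⟨(i - a).toNat, by omega⟩
  rw [List.get_ofFn] at this
  simp only [Fin.coe_cast] at this
  show x₀ (i + (l - a)) = y i
  have e1 : i + (l - a) = l + ((i - a).toNat : ℤ) := by omega
  rw [e1, this]
  congr 1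
  omega
end AuxMore

private theorem open_factor_of_SFT_is_SFT_aux {A : Type*} {B : Type*} [Finite A] [TopologicalSpace A] [DiscreteTopology A]
    [Finite B] [TopologicalSpace B] [DiscreteTopology B]
    {X : Set (ℤ → A)} {Y : Set (ℤ → B)} (hX : IsSubshift X) (hY : IsSubshift Y)
    (φ : ↥X → ↥Y) (hφ : IsCode φ)
    (hXsft : IsSFT X) (hsurj : Function.Surjective φ) (hopen : IsOpenMap φ) :
    IsSFT Y := by
  classical
  obtain ⟨F, hF⟩ := hXsft
  have havoid : ∀ x : ↥X, ∀ w ∈ F, ∀ k : ℤ, ¬ OccursAt (x : ℤ → A) k w := by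
    intro x
    exact (Set.ext_iff.mp hF _).mp x.2
  obtain ⟨r, hr⟩ := exists_radius hX.1 φ hφ.1
  obtain ⟨M, hMF, hMr⟩ : ∃ M : ℕ, (∀ w ∈ F, w.length ≤ M) ∧ r ≤ M :=
    ⟨max (F.sup List.length) r,
      fun w hw => le_trans (Finset.le_sup hw) (le_max_left _ _), le_max_right _ _⟩
  obtain ⟨m, hmM, hm⟩ := uniform_open hX hφ hopen M
  have hmM' : (M : ℤ) ≤ (m : ℤ) := by exact_mod_cast hmM
  have hMr' : (r : ℤ) ≤ (M : ℤ) := by exact_mod_cast hMr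
  obtain ⟨N, hN⟩ : ∃ N : ℕ, N = 2 * m + 2 := ⟨2 * m + 2, rfl⟩
  have hN' : (N : ℤ) = 2 * (m : ℤ) + 2 := by rw [hN]; push_cast; ring
  have hfin : {w : List B | w.length = N ∧ ¬ WordIn Y w}.Finite :=
    (List.finite_length_eq B N).subset (fun w hw => hw.1)
  refine ⟨hfin.toFinset, ?_⟩
  ext y
  simp only [Set.mem_setOf_eq, Set.Finite.mem_toFinset]
  constructor
  · intro hy w hw k hocc
    exact hw.2 ⟨y, hy, k, hocc⟩
  · intro hbad
    have hgood : ∀ a : ℤ, WordIn Y (List.ofFn (fun i : Fin N => y (a + ((i : ℕ) : ℤ)))) := by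
      intro a
      by_contra hcon
      refine hbad _ ⟨List.length_ofFn, hcon⟩ a (fun i => ?_)
      rw [List.get_ofFn]
      simp
    have hwin : ∀ a b : ℤ, b + 1 ≤ a + N → ∃ z ∈ Y, ∀ i : ℤ, a ≤ i → i ≤ b → z i = y i := by
      intro a b hb
      obtain ⟨z, hz, hzy⟩ := window_point hY (hgood a)
      exact ⟨z, hz, fun i h1 h2 => hzy i h1 (by omega)⟩
    -- right extension step
    have rightStep : ∀ j : ℤ, (m : ℤ) ≤ j → ∀ x : ↥X,
        (∀ k : ℤ, -j ≤ k → k ≤ j → (φ x : ℤ → B) k = y k) →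
        ∃ x' : ↥X, ∀ k : ℤ, -j ≤ k → k ≤ j + 1 → (φ x' : ℤ → B) k = y k := by
      intro j hj x hxy
      set c : ℤ := j - m with hc
      obtain ⟨z, hz, hzy⟩ := hwin (j - 2 * m) (j + 1) (by omega)
      have hagr : ∀ i : ℤ, |i - c| ≤ (m : ℤ) → z i = (φ x : ℤ → B) i := by
        intro i hi
        have h1 := abs_le.mp hi
        rw [hzy i (by omega) (by omega)]
        exact (hxy i (by omega) (by omega)).symm
      obtain ⟨x'', hφx'', hx''⟩ := uniform_open_center hX hY hφ hm c x z hz hagr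
      set xs : ℤ → A := fun i => if i ≤ c then (x : ℤ → A) i else (x'' : ℤ → A) i with hxsdef
      have hagree : ∀ i : ℤ, c ≤ i → i ≤ c + M → (x : ℤ → A) i = (x'' : ℤ → A) i := by
        intro i h1 h2
        exact (hx'' i (by rw [abs_le]; omega)).symm
      have hxsX : xs ∈ X :=
        (Set.ext_iff.mp hF _).mpr (splice_avoids hMF (havoid x) (havoid x'') c hagree)
      have hxs_left : ∀ i : ℤ, i ≤ c + M → xs i = (x : ℤ → A) i := by
        intro i hi
        by_cases h : i ≤ c
        · simp [hxsdef, h]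
        · simp only [hxsdef, h, if_false]
          exact (hagree i (by omega) hi).symm
      have hxs_right : ∀ i : ℤ, c - M ≤ i → xs i = (x'' : ℤ → A) i := by
        intro i hi
        by_cases h : i ≤ c
        · simp only [hxsdef, h, if_true]
          exact (hx'' i (by rw [abs_le]; omega)).symm
        · simp [hxsdef, h]
      refine ⟨⟨xs, hxsX⟩, fun k hk1 hk2 => ?_⟩
      by_cases hcase : k ≤ c + (M : ℤ) - r
      · have e1 : (φ ⟨xs, hxsX⟩ : ℤ → B) k = (φ x : ℤ → B) k := by
          refine radius_coord hX hφ hr k _ x fun i hi => ?_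
          have h1 := abs_le.mp hi
          exact hxs_left i (by omega)
        rw [e1]
        exact hxy k hk1 (by omega)
      · have e1 : (φ ⟨xs, hxsX⟩ : ℤ → B) k = (φ x'' : ℤ → B) k := by
          refine radius_coord hX hφ hr k _ x'' fun i hi => ?_
          have h1 := abs_le.mp hi
          exact hxs_right i (by omega)
        rw [e1, hφx'']
        exact hzy k (by omega) (by omega)
    -- left extension step
    have leftStep : ∀ j : ℤ, (m : ℤ) ≤ j → ∀ x : ↥X,
        (∀ k : ℤ, -j ≤ k → k ≤ j + 1 → (φ x : ℤ → B) k = y k) →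
        ∃ x' : ↥X, ∀ k : ℤ, -(j + 1) ≤ k → k ≤ j + 1 → (φ x' : ℤ → B) k = y k := by
      intro j hj x hxy
      set c : ℤ := -j + m with hc
      obtain ⟨z, hz, hzy⟩ := hwin (-j - 1) (-j + 2 * m) (by omega)
      have hagr : ∀ i : ℤ, |i - c| ≤ (m : ℤ) → z i = (φ x : ℤ → B) i := by
        intro i hi
        have h1 := abs_le.mp hi
        rw [hzy i (by omega) (by omega)]
        exact (hxy i (by omega) (by omega)).symm
      obtain ⟨x'', hφx'', hx''⟩ := uniform_open_center hX hY hφ hm c x z hz hagr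
      set xs : ℤ → A := fun i => if i ≤ c then (x'' : ℤ → A) i else (x : ℤ → A) i with hxsdef
      have hagree : ∀ i : ℤ, c ≤ i → i ≤ c + M → (x'' : ℤ → A) i = (x : ℤ → A) i := by
        intro i h1 h2
        exact hx'' i (by rw [abs_le]; omega)
      have hxsX : xs ∈ X :=
        (Set.ext_iff.mp hF _).mpr (splice_avoids hMF (havoid x'') (havoid x) c hagree)
      have hxs_left : ∀ i : ℤ, i ≤ c + M → xs i = (x'' : ℤ → A) i := by
        intro i hi
        by_cases h : i ≤ c
        · simp [hxsdef, h]
        · simp only [hxsdef, h, if_false]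
          exact (hagree i (by omega) hi).symm
      have hxs_right : ∀ i : ℤ, c - M ≤ i → xs i = (x : ℤ → A) i := by
        intro i hi
        by_cases h : i ≤ c
        · simp only [hxsdef, h, if_true]
          exact hx'' i (by rw [abs_le]; omega)
        · simp [hxsdef, h]
      refine ⟨⟨xs, hxsX⟩, fun k hk1 hk2 => ?_⟩
      by_cases hcase : k ≤ c + (M : ℤ) - r
      · have e1 : (φ ⟨xs, hxsX⟩ : ℤ → B) k = (φ x'' : ℤ → B) k := by
          refine radius_coord hX hφ hr k _ x'' fun i hi => ?_
          have h1 := abs_le.mp hi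
          exact hxs_left i (by omega)
        rw [e1, hφx'']
        exact hzy k (by omega) (by omega)
      · have e1 : (φ ⟨xs, hxsX⟩ : ℤ → B) k = (φ x : ℤ → B) k := by
          refine radius_coord hX hφ hr k _ x fun i hi => ?_
          have h1 := abs_le.mp hi
          exact hxs_right i (by omega)
        rw [e1]
        exact hxy k (by omega) hk2
    -- main induction
    have main : ∀ n : ℕ, m ≤ n → ∃ x : ↥X,
        ∀ k : ℤ, -((n : ℕ) : ℤ) ≤ k → k ≤ ((n : ℕ) : ℤ) → (φ x : ℤ → B) k = y k := by
      intro n hn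
      induction n, hn using Nat.le_induction with
      | base =>
          obtain ⟨z, hz, hzy⟩ := hwin (-(m : ℤ)) (m : ℤ) (by omega)
          obtain ⟨x₀, hx₀⟩ := hsurj ⟨z, hz⟩
          refine ⟨x₀, fun k hk1 hk2 => ?_⟩
          have : (φ x₀ : ℤ → B) = z := congrArg Subtype.val hx₀
          rw [this]
          exact hzy k hk1 hk2
      | succ n hn ih =>
          obtain ⟨x, hx⟩ := ih
          obtain ⟨x₁, hx₁⟩ := rightStep (n : ℤ) (by exact_mod_cast hn) x hx
          obtain ⟨x₂, hx₂⟩ := leftStep (n : ℤ) (by exact_mod_cast hn) x₁ hx₁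
          refine ⟨x₂, fun k hk1 hk2 => ?_⟩
          refine hx₂ k (by push_cast at hk1 ⊢; omega) (by push_cast at hk2 ⊢; omega)
    -- compactness limit
    have hcs : CompactSpace ↥X := isCompact_iff_compactSpace.mp hX.1.isCompact
    set S : ℕ → Set ↥X := fun n => {x : ↥X | ∀ k : ℤ,
      -(((n + m : ℕ) : ℕ) : ℤ) ≤ k → k ≤ (((n + m : ℕ) : ℕ) : ℤ) → (φ x : ℤ → B) k = y k}
      with hSdef
    have hSclosed : ∀ n, IsClosed (S n) := by
      intro n
      have he : S n = ⋂ k ∈ Finset.Icc (-(((n + m : ℕ) : ℕ) : ℤ)) (((n + m : ℕ) : ℕ) : ℤ),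
          (fun x : ↥X => (φ x : ℤ → B) k) ⁻¹' {y k} := by
        ext x
        simp only [hSdef, Set.mem_setOf_eq, Set.mem_iInter, Finset.mem_Icc,
          Set.mem_preimage, Set.mem_singleton_iff, and_imp]
      rw [he]
      refine isClosed_biInter fun k _ => ?_
      exact (isClosed_discrete {y k}).preimage
        ((continuous_apply k).comp (continuous_subtype_val.comp hφ.1))
    set C : ℕ → Set (ℤ → A) := fun n => Subtype.val '' S n with hCdef
    have hCcl : ∀ n, IsCompact (C n) :=
      fun n => ((hSclosed n).isCompact).image continuous_subtype_val
    have hCsub : ∀ n, C (n + 1) ⊆ C n := by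
      intro n
      refine Set.image_mono fun x hx => ?_
      intro k hk1 hk2
      refine hx k (by push_cast at hk1 ⊢; omega) (by push_cast at hk2 ⊢; omega)
    have hCne : ∀ n, (C n).Nonempty := by
      intro n
      obtain ⟨x, hx⟩ := main (n + m) (Nat.le_add_left m n)
      exact ⟨x.1, x, hx, rfl⟩
    obtain ⟨xinf, hxinf⟩ := IsCompact.nonempty_iInter_of_sequence_nonempty_isCompact_isClosed
      C hCsub hCne (hCcl 0) (fun n => (hCcl n).isClosed)
    have h0 := Set.mem_iInter.mp hxinf 0
    obtain ⟨x₀s, _, hx₀e⟩ := h0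
    have hmem : xinf ∈ X := hx₀e ▸ x₀s.2
    have hyeq : (φ ⟨xinf, hmem⟩ : ℤ → B) = y := by
      funext k
      obtain ⟨xsb, hxsS, hxse⟩ := Set.mem_iInter.mp hxinf k.natAbs
      have hxe : xsb = ⟨xinf, hmem⟩ := Subtype.ext hxse
      rw [← hxe]
      refine hxsS k ?_ ?_ <;> (simp only [Nat.cast_add]; omega)
    have := (φ ⟨xinf, hmem⟩).2
    rwa [hyeq] at this


theorem open_factor_of_SFT_is_SFT {A : Type*} {B : Type*} [Finite A] [TopologicalSpace A] [DiscreteTopology A]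
    [Finite B] [TopologicalSpace B] [DiscreteTopology B]
    {X : Set (ℤ → A)} {Y : Set (ℤ → B)} (hX : IsSubshift X) (hY : IsSubshift Y)
    (φ : X → Y) (hφ : IsCode φ)
    (hXsft : IsSFT X) (hsurj : Function.Surjective φ) (hopen : IsOpenMap φ) :
    IsSFT Y := by
  exact open_factor_of_SFT_is_SFT_aux hX hY φ hφ hXsft hsurj hopen
end

section
/- Let (Σ, ψ₁, ψ₂) be the fiber product of codes φ₁ : X → Z and φ₂ : Y → Z between shift spaces, with φ₂ onto. If ψ₂ is open, then φ₁ is open. -/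
open Set Function Filter

variable {A : Type*} {B : Type*} {C : Type*}

theorem fiber_product_open_descends {A : Type*} {B : Type*} {C : Type*}
    [Finite A] [TopologicalSpace A] [DiscreteTopology A]
    [Finite B] [TopologicalSpace B] [DiscreteTopology B]
    [Finite C] [TopologicalSpace C] [DiscreteTopology C]
    {X : Set (ℤ → A)} {Y : Set (ℤ → B)} {Z : Set (ℤ → C)}
    (hX : IsSubshift X) (hY : IsSubshift Y) (hZ : IsSubshift Z)
    (φ₁ : X → Z) (hφ₁ : IsCode φ₁) (φ₂ : Y → Z) (hφ₂ : IsCode φ₂)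
    (hsurj : Function.Surjective φ₂)
    (hopen : IsOpenMap (fun p : {p : X × Y // φ₁ p.1 = φ₂ p.2} => p.1.2)) :
    IsOpenMap φ₁ := by
  have hYcomp : CompactSpace Y := isCompact_iff_compactSpace.mp hY.1.isCompact
  have hclosed : IsClosedMap φ₂ := hφ₂.1.isClosedMap
  have hquot : Topology.IsQuotientMap φ₂ := hclosed.isQuotientMap hφ₂.1 hsurj
  intro U hU
  rw [← hquot.isOpen_preimage]
  have key : φ₂ ⁻¹' (φ₁ '' U) =
      (fun p : {p : X × Y // φ₁ p.1 = φ₂ p.2} => p.1.2) ''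
        ((fun p : {p : X × Y // φ₁ p.1 = φ₂ p.2} => p.1.1) ⁻¹' U) := by
    ext y
    constructor
    · rintro ⟨x, hxU, hx⟩
      exact ⟨⟨(x, y), hx⟩, hxU, rfl⟩
    · rintro ⟨⟨⟨x, y'⟩, hp⟩, hxU, rfl⟩
      exact ⟨x, hxU, hp⟩
  rw [key]
  exact hopen _ (hU.preimage (continuous_fst.comp continuous_subtype_val))
end

section
/- A code φ : X → Y between shift spaces is bi-closing if and only if there exists ε > 0 such that whenever x ≠ x̄ are two points with φ(x) = φ(x̄), then d(x, x̄) ≥ ε (i.e., each fiber is ε-separated). -/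
open Set Function Filter

variable {A : Type*} {B : Type*} {C : Type*}

section BiClosingAux

variable {A' : Type*} {B' : Type*}

/-- Shift by an arbitrary integer `m`. -/
def shiftBy (m : ℤ) (x : ℤ → A') : ℤ → A' := fun i => x (i + m)

lemma shiftBy_zero (x : ℤ → A') : shiftBy 0 x = x := funext fun i => by simp [shiftBy]

lemma shiftMap_shiftBy (m : ℤ) (x : ℤ → A') : shiftMap (shiftBy m x) = shiftBy (m + 1) x :=
  funext fun i => by simp only [shiftMap, shiftBy]; ring_nf

lemma shiftBy_injective (m : ℤ) : Function.Injective (shiftBy m : (ℤ → A') → (ℤ → A')) := by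
  intro a b h; funext i; have := congrFun h (i - m); simpa [shiftBy] using this

lemma shiftMap_injective : Function.Injective (shiftMap : (ℤ → A') → (ℤ → A')) :=
  shiftBy_injective 1

lemma mem_shiftBy {X : Set (ℤ → A')} (hX2 : shiftMap '' X = X) (m : ℤ) {x : ℤ → A'}
    (hx : x ∈ X) : shiftBy m x ∈ X := by
  induction m using Int.induction_on with
  | zero => rwa [shiftBy_zero]
  | succ i ih => rw [← shiftMap_shiftBy, ← hX2]; exact ⟨_, ih, rfl⟩
  | pred i ih =>
    rw [← hX2] at ih
    obtain ⟨z, hz, hzz⟩ := ih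
    have h2 : shiftMap (shiftBy (-(i:ℤ) - 1) x) = shiftBy (-(i:ℤ)) x := by
      rw [shiftMap_shiftBy]; norm_num
    have : z = shiftBy (-(i:ℤ) - 1) x := shiftMap_injective (hzz.trans h2.symm)
    rwa [← this]

lemma code_shiftBy [TopologicalSpace A'] [TopologicalSpace B'] {X : Set (ℤ → A')}
    {Y : Set (ℤ → B')} (hX2 : shiftMap '' X = X) {φ : X → Y} (hφ : IsCode φ) (m : ℤ)
    (x : X) (h : shiftBy m (x : ℤ → A') ∈ X) :
    ((φ ⟨shiftBy m (x : ℤ → A'), h⟩ : Y) : ℤ → B') = shiftBy m ((φ x : Y) : ℤ → B') := by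
  revert h
  induction m using Int.induction_on with
  | zero =>
    intro h
    have e : (⟨shiftBy 0 (x : ℤ → A'), h⟩ : X) = x := Subtype.ext (shiftBy_zero _)
    rw [e, shiftBy_zero]
  | succ i ih =>
    intro h
    have hm : shiftBy (i : ℤ) (x : ℤ → A') ∈ X := mem_shiftBy hX2 _ x.2
    set z : X := ⟨shiftBy (i : ℤ) (x : ℤ → A'), hm⟩ with hzdef
    have hz' : shiftMap (z : ℤ → A') ∈ X := by
      show shiftMap (shiftBy (i : ℤ) (x : ℤ → A')) ∈ X
      rw [shiftMap_shiftBy]; exact h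
    have e : (⟨shiftBy ((i : ℤ) + 1) (x : ℤ → A'), h⟩ : X) = ⟨shiftMap (z : ℤ → A'), hz'⟩ :=
      Subtype.ext (shiftMap_shiftBy (i : ℤ) (x : ℤ → A')).symm
    rw [e, hφ.2 z hz']
    rw [show ((φ z : Y) : ℤ → B') = shiftBy (i : ℤ) ((φ x : Y) : ℤ → B') from ih hm]
    rw [shiftMap_shiftBy]
  | pred i ih =>
    intro h
    set z : X := ⟨shiftBy (-(i:ℤ) - 1) (x : ℤ → A'), h⟩ with hzdef
    have hσ : shiftMap (z : ℤ → A') = shiftBy (-(i:ℤ)) (x : ℤ → A') := by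
      show shiftMap (shiftBy (-(i:ℤ) - 1) (x : ℤ → A')) = _
      rw [shiftMap_shiftBy]; norm_num
    have hmem : shiftMap (z : ℤ → A') ∈ X := by
      rw [hσ]; exact mem_shiftBy hX2 _ x.2
    have hstep := hφ.2 z hmem
    have e : (⟨shiftMap (z : ℤ → A'), hmem⟩ : X)
        = ⟨shiftBy (-(i:ℤ)) (x : ℤ → A'), mem_shiftBy hX2 _ x.2⟩ := Subtype.ext hσ
    rw [e, ih (mem_shiftBy hX2 _ x.2)] at hstep
    have h2 : shiftBy (-(i:ℤ)) ((φ x : Y) : ℤ → B')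
        = shiftMap (shiftBy (-(i:ℤ) - 1) ((φ x : Y) : ℤ → B')) := by
      rw [shiftMap_shiftBy]; norm_num
    rw [h2] at hstep
    exact shiftMap_injective hstep.symm

lemma bddAbove_agreeSet {x y : ℤ → A'} (h : x ≠ y) :
    BddAbove {n : ℕ | ∀ i : ℤ, |i| ≤ (n : ℤ) → x i = y i} := by
  obtain ⟨j, hj⟩ := Function.ne_iff.mp h
  refine ⟨j.natAbs, fun m hm => ?_⟩
  by_contra hlt
  push_neg at hlt
  have : |j| ≤ (m : ℤ) := by rw [Int.abs_eq_natAbs]; exact_mod_cast hlt.le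
  exact hj (hm j this)

lemma shiftDist_le {x y : ℤ → A'} (h : x ≠ y) (k : ℕ)
    (hk : ∀ i : ℤ, |i| ≤ (k : ℤ) → x i = y i) : shiftDist x y ≤ (2 : ℝ) ^ (-(k : ℤ)) := by
  rw [shiftDist, if_neg h]
  have hle : (k : ℤ) ≤ (sSup {n : ℕ | ∀ i : ℤ, |i| ≤ (n : ℤ) → x i = y i} : ℕ) := by
    exact_mod_cast le_csSup (bddAbove_agreeSet h) hk
  exact zpow_le_zpow_right₀ one_le_two (by omega)

lemma agree_of_shiftDist_lt {x y : ℤ → A'} (h : x ≠ y) (n : ℕ)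
    (hd : shiftDist x y < (2 : ℝ) ^ (-(n : ℤ))) : ∀ i : ℤ, |i| ≤ (n : ℤ) → x i = y i := by
  rw [shiftDist, if_neg h] at hd
  set S := {m : ℕ | ∀ i : ℤ, |i| ≤ (m : ℤ) → x i = y i} with hS
  have hk : (n : ℤ) < (sSup S : ℕ) := by
    have := (zpow_lt_zpow_iff_right₀ one_lt_two).mp hd
    omega
  have hSne : S.Nonempty := by
    rcases S.eq_empty_or_nonempty with he | hne
    · exfalso; rw [he] at hk; rw [csSup_empty] at hk; simp at hk; omega
    · exact hne
  have hmem : sSup S ∈ S := Nat.sSup_mem hSne (bddAbove_agreeSet h)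
  intro i hi
  exact hmem i (hi.trans hk.le)

end BiClosingAux

theorem biclosing_iff_separated_fibers {A : Type*} {B : Type*} [Finite A] [TopologicalSpace A] [DiscreteTopology A]
    [Finite B] [TopologicalSpace B] [DiscreteTopology B]
    {X : Set (ℤ → A)} {Y : Set (ℤ → B)} (hX : IsSubshift X) (hY : IsSubshift Y)
    (φ : X → Y) (hφ : IsCode φ) :
    BiClosing φ ↔ ∃ ε : ℝ, 0 < ε ∧ ∀ x x' : X, φ x = φ x' → x ≠ x' →
      ε ≤ shiftDist (x : ℤ → A) (x' : ℤ → A) := by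
  classical
  obtain ⟨hXc, hX2⟩ := hX
  haveI : CompactSpace A := Finite.compactSpace
  haveI : CompactSpace X := isCompact_iff_compactSpace.mp hXc.isCompact
  haveI : T2Space B := DiscreteTopology.toT2Space
  constructor
  · -- bi-closing implies separated fibers
    rintro ⟨hRC, hLC⟩
    by_contra hno
    push_neg at hno
    -- evaluation maps are continuous
    have hev : ∀ i : ℤ, Continuous fun p : X × X => (p.1 : ℤ → A) i := fun i =>
      (continuous_apply i).comp (continuous_subtype_val.comp continuous_fst)
    have hev' : ∀ i : ℤ, Continuous fun p : X × X => (p.2 : ℤ → A) i := fun i =>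
      (continuous_apply i).comp (continuous_subtype_val.comp continuous_snd)
    have heq_closed : IsClosed {p : X × X | φ p.1 = φ p.2} :=
      isClosed_eq (hφ.1.comp continuous_fst) (hφ.1.comp continuous_snd)
    have hne_closed : IsClosed {p : X × X | (p.1 : ℤ → A) 0 ≠ (p.2 : ℤ → A) 0} := by
      have hopen : IsOpen {p : X × X | (p.1 : ℤ → A) 0 = (p.2 : ℤ → A) 0} := by
        have hc : Continuous fun p : X × X => (((p.1 : ℤ → A) 0), ((p.2 : ℤ → A) 0)) :=
          (hev 0).prodMk (hev' 0)
        have he : {p : X × X | (p.1 : ℤ → A) 0 = (p.2 : ℤ → A) 0}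
            = (fun p : X × X => (((p.1 : ℤ → A) 0), ((p.2 : ℤ → A) 0))) ⁻¹'
              {q : A × A | q.1 = q.2} := rfl
        rw [he]
        exact (isOpen_discrete _).preimage hc
      exact hopen.isClosed_compl
    set SA : ℕ → Set (X × X) := fun n =>
      {p | φ p.1 = φ p.2 ∧ (p.1 : ℤ → A) 0 ≠ (p.2 : ℤ → A) 0 ∧
        ∀ i : ℤ, -(n : ℤ) ≤ i → i ≤ -1 → (p.1 : ℤ → A) i = (p.2 : ℤ → A) i} with hSAdef
    set SB : ℕ → Set (X × X) := fun n =>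
      {p | φ p.1 = φ p.2 ∧ (p.1 : ℤ → A) 0 ≠ (p.2 : ℤ → A) 0 ∧
        ∀ i : ℤ, 1 ≤ i → i ≤ (n : ℤ) → (p.1 : ℤ → A) i = (p.2 : ℤ → A) i} with hSBdef
    have hSAcl : ∀ n, IsClosed (SA n) := by
      intro n
      have h3 : IsClosed {p : X × X | ∀ i : ℤ, -(n : ℤ) ≤ i → i ≤ -1 →
          (p.1 : ℤ → A) i = (p.2 : ℤ → A) i} := by
        have he : {p : X × X | ∀ i : ℤ, -(n : ℤ) ≤ i → i ≤ -1 →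
            (p.1 : ℤ → A) i = (p.2 : ℤ → A) i}
            = ⋂ (i : ℤ), ⋂ (_ : -(n : ℤ) ≤ i), ⋂ (_ : i ≤ -1),
              {p : X × X | (p.1 : ℤ → A) i = (p.2 : ℤ → A) i} := by
          ext p; simp
        rw [he]
        exact isClosed_iInter fun i => isClosed_iInter fun _ => isClosed_iInter fun _ =>
          isClosed_eq (hev i) (hev' i)
      exact heq_closed.inter (hne_closed.inter h3)
    have hSBcl : ∀ n, IsClosed (SB n) := by
      intro n
      have h3 : IsClosed {p : X × X | ∀ i : ℤ, 1 ≤ i → i ≤ (n : ℤ) →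
          (p.1 : ℤ → A) i = (p.2 : ℤ → A) i} := by
        have he : {p : X × X | ∀ i : ℤ, 1 ≤ i → i ≤ (n : ℤ) →
            (p.1 : ℤ → A) i = (p.2 : ℤ → A) i}
            = ⋂ (i : ℤ), ⋂ (_ : 1 ≤ i), ⋂ (_ : i ≤ (n : ℤ)),
              {p : X × X | (p.1 : ℤ → A) i = (p.2 : ℤ → A) i} := by
          ext p; simp
        rw [he]
        exact isClosed_iInter fun i => isClosed_iInter fun _ => isClosed_iInter fun _ =>
          isClosed_eq (hev i) (hev' i)
      exact heq_closed.inter (hne_closed.inter h3)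
    have hSAmono : ∀ {m n : ℕ}, m ≤ n → SA n ⊆ SA m := by
      intro m n hmn p hp
      exact ⟨hp.1, hp.2.1, fun i h1 h2 => hp.2.2 i (by omega) h2⟩
    have hSBmono : ∀ {m n : ℕ}, m ≤ n → SB n ⊆ SB m := by
      intro m n hmn p hp
      exact ⟨hp.1, hp.2.1, fun i h1 h2 => hp.2.2 i h1 (by omega)⟩
    have hnonempty : ∀ n : ℕ, (SA n ∪ SB n).Nonempty := by
      intro n
      obtain ⟨x, x', himg, hne, hd⟩ := hno ((2 : ℝ) ^ (-(n : ℤ))) (by positivity)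
      have hxx : (x : ℤ → A) ≠ (x' : ℤ → A) := fun h => hne (Subtype.ext h)
      have hagree := agree_of_shiftDist_lt hxx n hd
      set T : Set ℕ := {m | ∃ j : ℤ, j.natAbs = m ∧ (x : ℤ → A) j ≠ (x' : ℤ → A) j} with hT
      have hTne : T.Nonempty := by
        obtain ⟨j, hj⟩ := Function.ne_iff.mp hxx
        exact ⟨j.natAbs, j, rfl, hj⟩
      obtain ⟨j₀, hj₀abs, hj₀⟩ := Nat.sInf_mem hTne
      have hmin : ∀ i : ℤ, i.natAbs < sInf T → (x : ℤ → A) i = (x' : ℤ → A) i := by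
        intro i hi
        by_contra hcon
        exact absurd (Nat.sInf_le (show i.natAbs ∈ T from ⟨i, rfl, hcon⟩)) (by omega)
      have hbig : (n : ℤ) < (j₀.natAbs : ℤ) := by
        by_contra hle
        push_neg at hle
        exact hj₀ (hagree j₀ (by rw [Int.abs_eq_natAbs]; exact hle))
      have hj₀ne : j₀ ≠ 0 := by
        rintro rfl; simp at hbig; omega
      rcases lt_or_gt_of_ne hj₀ne with hneg | hpos
      · -- j₀ < 0 : produce an element of SB n
        refine ⟨(⟨shiftBy j₀ (x : ℤ → A), mem_shiftBy hX2 _ x.2⟩,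
            ⟨shiftBy j₀ (x' : ℤ → A), mem_shiftBy hX2 _ x'.2⟩), Or.inr ⟨?_, ?_, ?_⟩⟩
        · refine Subtype.ext ?_
          rw [code_shiftBy hX2 hφ j₀ x (mem_shiftBy hX2 _ x.2),
            code_shiftBy hX2 hφ j₀ x' (mem_shiftBy hX2 _ x'.2), himg]
        · show shiftBy j₀ (x : ℤ → A) 0 ≠ shiftBy j₀ (x' : ℤ → A) 0
          simpa [shiftBy] using hj₀
        · intro i h1 h2
          show (x : ℤ → A) (i + j₀) = (x' : ℤ → A) (i + j₀)
          apply hmin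
          rw [← hj₀abs]
          omega
      · -- j₀ > 0 : produce an element of SA n
        refine ⟨(⟨shiftBy j₀ (x : ℤ → A), mem_shiftBy hX2 _ x.2⟩,
            ⟨shiftBy j₀ (x' : ℤ → A), mem_shiftBy hX2 _ x'.2⟩), Or.inl ⟨?_, ?_, ?_⟩⟩
        · refine Subtype.ext ?_
          rw [code_shiftBy hX2 hφ j₀ x (mem_shiftBy hX2 _ x.2),
            code_shiftBy hX2 hφ j₀ x' (mem_shiftBy hX2 _ x'.2), himg]
        · show shiftBy j₀ (x : ℤ → A) 0 ≠ shiftBy j₀ (x' : ℤ → A) 0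
          simpa [shiftBy] using hj₀
        · intro i h1 h2
          show (x : ℤ → A) (i + j₀) = (x' : ℤ → A) (i + j₀)
          apply hmin
          rw [← hj₀abs]
          omega
    set Sn : ℕ → Set (X × X) := fun n => SA n ∪ SB n with hSndef
    have hdec : ∀ n, Sn (n + 1) ⊆ Sn n := fun n =>
      Set.union_subset_union (hSAmono (Nat.le_succ n)) (hSBmono (Nat.le_succ n))
    have hcl : ∀ n, IsClosed (Sn n) := fun n => (hSAcl n).union (hSBcl n)
    obtain ⟨p, hp⟩ := IsCompact.nonempty_iInter_of_sequence_nonempty_isCompact_isClosed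
      Sn hdec hnonempty ((hcl 0).isCompact) hcl
    rw [Set.mem_iInter] at hp
    have hAB : (∀ n, p ∈ SA n) ∨ (∀ n, p ∈ SB n) := by
      by_cases hA : ∀ n, p ∈ SA n
      · exact Or.inl hA
      · push_neg at hA
        obtain ⟨n₀, hn₀⟩ := hA
        refine Or.inr fun n => ?_
        have h1 := hp (max n n₀)
        rw [Set.mem_union] at h1
        rcases h1 with h | h
        · exact absurd (hSAmono (le_max_right n n₀) h) hn₀
        · exact hSBmono (le_max_left n n₀) h
    rcases hAB with hA | hB
    · have h0 := hA 0
      have hne : p.1 ≠ p.2 := fun h => h0.2.1 (by rw [h])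
      have hasym : LeftAsymptotic (p.1 : ℤ → A) (p.2 : ℤ → A) := by
        refine ⟨-1, fun i hi => ?_⟩
        exact (hA i.natAbs).2.2 i (by omega) hi
      exact hne (hRC p.1 p.2 hasym h0.1)
    · have h0 := hB 0
      have hne : p.1 ≠ p.2 := fun h => h0.2.1 (by rw [h])
      have hasym : RightAsymptotic (p.1 : ℤ → A) (p.2 : ℤ → A) := by
        refine ⟨1, fun i hi => ?_⟩
        exact (hB i.natAbs).2.2 i hi (by omega)
      exact hne (hLC p.1 p.2 hasym h0.1)
  · -- separated fibers imply bi-closing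
    rintro ⟨ε, hε, hsep⟩
    obtain ⟨k₀, hk₀⟩ : ∃ k : ℕ, (2 : ℝ) ^ (-(k : ℤ)) < ε := by
      obtain ⟨k, hk⟩ := exists_pow_lt_of_lt_one hε (by norm_num : (1 / 2 : ℝ) < 1)
      refine ⟨k, ?_⟩
      calc (2 : ℝ) ^ (-(k : ℤ)) = (1 / 2 : ℝ) ^ k := by
            rw [zpow_neg, zpow_natCast, one_div, inv_pow]
        _ < ε := hk
    have main : ∀ x x' : X, x ≠ x' → φ x = φ x' → ∀ m : ℤ,
        ∃ i : ℤ, |i| ≤ (k₀ : ℤ) ∧ (x : ℤ → A) (i + m) ≠ (x' : ℤ → A) (i + m) := by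
      intro x x' hne himg m
      have hmem : shiftBy m (x : ℤ → A) ∈ X := mem_shiftBy hX2 m x.2
      have hmem' : shiftBy m (x' : ℤ → A) ∈ X := mem_shiftBy hX2 m x'.2
      have hzne : (⟨shiftBy m (x : ℤ → A), hmem⟩ : X) ≠ ⟨shiftBy m (x' : ℤ → A), hmem'⟩ := by
        intro h
        exact hne (Subtype.ext (shiftBy_injective m (congrArg Subtype.val h)))
      have hcne : shiftBy m (x : ℤ → A) ≠ shiftBy m (x' : ℤ → A) := fun h =>
        hzne (Subtype.ext h)
      have himg' : φ ⟨shiftBy m (x : ℤ → A), hmem⟩ = φ ⟨shiftBy m (x' : ℤ → A), hmem'⟩ := by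
        refine Subtype.ext ?_
        rw [code_shiftBy hX2 hφ m x hmem, code_shiftBy hX2 hφ m x' hmem', himg]
      have hsep' := hsep _ _ himg' hzne
      by_contra hagree
      push_neg at hagree
      have hag : ∀ i : ℤ, |i| ≤ (k₀ : ℤ) → shiftBy m (x : ℤ → A) i = shiftBy m (x' : ℤ → A) i :=
        fun i hi => hagree i hi
      have hd := shiftDist_le hcne k₀ hag
      simp only at hsep' hd
      linarith
    constructor
    · intro x x' hasym himg
      obtain ⟨N, hN⟩ := hasym
      by_contra hne
      obtain ⟨i, hi, hnei⟩ := main x x' hne himg (N - (k₀ : ℤ))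
      have hi' := abs_le.mp hi
      exact hnei (hN (i + (N - (k₀ : ℤ))) (by omega))
    · intro x x' hasym himg
      obtain ⟨N, hN⟩ := hasym
      by_contra hne
      obtain ⟨i, hi, hnei⟩ := main x x' hne himg (N + (k₀ : ℤ))
      have hi' := abs_le.mp hi
      exact hnei (hN (i + (N + (k₀ : ℤ))) (by omega))
end

section
/- Let φ : X → Y be a bi-closing factor code from a shift space X onto an irreducible shift space Y. Then there exists d > 0 such that every doubly transitive point of Y has exactly d preimages, and every point of Y has at least d preimages. -/
open Set Function Filter

variable {A : Type*} {B : Type*} {C : Type*}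

/-! ### Auxiliary development for the degree theorem -/

section DegreeAux

open Topology

variable {A' : Type*} {B' : Type*}

/-- Shift by `k` (for `k = 1` this is `shiftMap`). -/
def zshift (k : ℤ) (x : ℤ → A') : ℤ → A' := fun i => x (i + k)

lemma zshift_zshift (a b : ℤ) (x : ℤ → A') : zshift a (zshift b x) = zshift (a + b) x := by
  funext i; simp [zshift, add_assoc]

@[simp] lemma zshift_zero (x : ℤ → A') : zshift 0 x = x := by
  funext i; simp [zshift]

lemma zshift_cancel (a : ℤ) (x : ℤ → A') : zshift (-a) (zshift a x) = x := by
  rw [zshift_zshift]; simp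

lemma zshift_injective (a : ℤ) : Function.Injective (zshift a (A' := A')) := by
  intro x y h
  have := congrArg (zshift (-a)) h
  rwa [zshift_cancel, zshift_cancel] at this

lemma shiftMap_eq_zshift (x : ℤ → A') : shiftMap x = zshift 1 x := rfl

lemma zshift_mem [TopologicalSpace A'] {X : Set (ℤ → A')} (hX : IsSubshift X)
    {x : ℤ → A'} (hx : x ∈ X) (k : ℤ) : zshift k x ∈ X := by
  induction k using Int.induction_on with
  | zero => simpa using hx
  | succ k ih =>
    have he : zshift ((k : ℤ) + 1) x = shiftMap (zshift k x) := by
      funext i; show x (i + ((k : ℤ) + 1)) = x (i + 1 + k); congr 1; ring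
    rw [he, ← hX.2]
    exact ⟨_, ih, rfl⟩
  | pred k ih =>
    have h1 : zshift (-k) x ∈ shiftMap '' X := by rw [hX.2]; exact ih
    obtain ⟨w, hw, hwe⟩ := h1
    have : w = zshift (-(k : ℤ) - 1) x := by
      have := congrArg (zshift (-1)) hwe
      rw [shiftMap_eq_zshift, zshift_cancel, zshift_zshift] at this
      rw [this]; congr 1; ring
    rw [this] at hw
    exact hw

lemma code_zshift [TopologicalSpace A'] [TopologicalSpace B']
    {X : Set (ℤ → A')} {Y : Set (ℤ → B')}
    (hX : IsSubshift X) (φ : X → Y) (hφ : IsCode φ) :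
    ∀ (k : ℤ) (x : X) (h : zshift k (x : ℤ → A') ∈ X),
      ((φ ⟨zshift k (x : ℤ → A'), h⟩ : Y) : ℤ → B') = zshift k ((φ x : Y) : ℤ → B') := by
  have one : ∀ (x : X) (h : zshift 1 (x : ℤ → A') ∈ X),
      ((φ ⟨zshift 1 (x : ℤ → A'), h⟩ : Y) : ℤ → B') = zshift 1 ((φ x : Y) : ℤ → B') := by
    intro x h
    exact hφ.2 x h
  have negone : ∀ (x : X) (h : zshift (-1) (x : ℤ → A') ∈ X),
      ((φ ⟨zshift (-1) (x : ℤ → A'), h⟩ : Y) : ℤ → B') = zshift (-1) ((φ x : Y) : ℤ → B') := by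
    intro x h
    set x' : X := ⟨zshift (-1) (x : ℤ → A'), h⟩ with hx'
    have hsm : shiftMap (x' : ℤ → A') = (x : ℤ → A') := by
      show zshift 1 (zshift (-1) (x : ℤ → A')) = (x : ℤ → A')
      rw [zshift_zshift]; simp
    have hmem : shiftMap (x' : ℤ → A') ∈ X := by rw [hsm]; exact x.2
    have h2 := hφ.2 x' hmem
    have e1 : (⟨shiftMap (x' : ℤ → A'), hmem⟩ : X) = x := Subtype.ext hsm
    rw [e1] at h2
    have := congrArg (zshift (-1)) h2
    rw [shiftMap_eq_zshift, zshift_cancel] at this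
    rw [this]
  intro k
  induction k using Int.induction_on with
  | zero =>
    intro x h
    have e : (⟨zshift 0 (x : ℤ → A'), h⟩ : X) = x := Subtype.ext (by simp)
    rw [e]; simp
  | succ k ih =>
    intro x h
    have hmem : zshift k (x : ℤ → A') ∈ X := zshift_mem hX x.2 k
    set xk : X := ⟨zshift k (x : ℤ → A'), hmem⟩ with hxk
    have he : zshift ((k : ℤ) + 1) (x : ℤ → A') = zshift 1 (xk : ℤ → A') := by
      rw [zshift_zshift]; congr 1; ring
    have hmem1 : zshift 1 (xk : ℤ → A') ∈ X := by rw [← he]; exact h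
    have e1 : (⟨zshift ((k : ℤ) + 1) (x : ℤ → A'), h⟩ : X) = ⟨zshift 1 (xk : ℤ → A'), hmem1⟩ :=
      Subtype.ext he
    rw [e1, one xk hmem1, ih x hmem, zshift_zshift]
    congr 1; ring
  | pred k ih =>
    intro x h
    have hmem : zshift (-(k : ℤ)) (x : ℤ → A') ∈ X := zshift_mem hX x.2 _
    set xk : X := ⟨zshift (-(k : ℤ)) (x : ℤ → A'), hmem⟩ with hxk
    have he : zshift (-(k : ℤ) - 1) (x : ℤ → A') = zshift (-1) (xk : ℤ → A') := by
      rw [zshift_zshift]; congr 1; ring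
    have hmem1 : zshift (-1) (xk : ℤ → A') ∈ X := by rw [← he]; exact h
    have e1 : (⟨zshift (-(k : ℤ) - 1) (x : ℤ → A'), h⟩ : X) = ⟨zshift (-1) (xk : ℤ → A'), hmem1⟩ :=
      Subtype.ext he
    rw [e1, negone xk hmem1, ih x hmem, zshift_zshift]
    congr 1; ring

lemma tendsto_pi_discrete [TopologicalSpace A'] [DiscreteTopology A']
    {u : ℕ → (ℤ → A')} {z : ℤ → A'} :
    Tendsto u atTop (𝓝 z) ↔ ∀ i, ∀ᶠ m in atTop, u m i = z i := by
  rw [tendsto_pi_nhds]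
  refine forall_congr' fun i => ?_
  rw [nhds_discrete, tendsto_pure]

section Closing

variable [Finite A'] [TopologicalSpace A'] [DiscreteTopology A']
  [TopologicalSpace B'] [DiscreteTopology B']
  {X : Set (ℤ → A')} {Y : Set (ℤ → B')}

lemma uniform_right_closing (hX : IsSubshift X) (φ : X → Y) (hφ : IsCode φ)
    (hrc : RightClosing φ) :
    ∃ m : ℕ, ∀ x x' : X, φ x = φ x' →
      (∀ i : ℤ, -(m : ℤ) ≤ i → i ≤ 0 → (x : ℤ → A') i = (x' : ℤ → A') i) →
      (x : ℤ → A') 1 = (x' : ℤ → A') 1 := by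
  haveI : CompactSpace X := isCompact_iff_compactSpace.mp hX.1.isCompact
  by_contra hcon
  push_neg at hcon
  choose u v huv hagree hne using hcon
  obtain ⟨z, ψ, hψ, hz⟩ := CompactSpace.tendsto_subseq (fun m => ((u m, v m) : X × X))
  have hz1 : Tendsto (fun k => u (ψ k)) atTop (𝓝 z.1) := (continuous_fst.tendsto z).comp hz
  have hz2 : Tendsto (fun k => v (ψ k)) atTop (𝓝 z.2) := (continuous_snd.tendsto z).comp hz
  have hz1' : ∀ i, ∀ᶠ k in atTop, ((u (ψ k) : ℤ → A')) i = (z.1 : ℤ → A') i :=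
    tendsto_pi_discrete.mp (tendsto_subtype_rng.mp hz1)
  have hz2' : ∀ i, ∀ᶠ k in atTop, ((v (ψ k) : ℤ → A')) i = (z.2 : ℤ → A') i :=
    tendsto_pi_discrete.mp (tendsto_subtype_rng.mp hz2)
  have hla : LeftAsymptotic (z.1 : ℤ → A') (z.2 : ℤ → A') := by
    refine ⟨0, fun i hi => ?_⟩
    have h3 : ∀ᶠ k in atTop, -((ψ k : ℕ) : ℤ) ≤ i := by
      filter_upwards [eventually_ge_atTop i.natAbs] with k hk
      have := hψ.le_apply (x := k)
      omega
    obtain ⟨k, h1, h2, h3⟩ := ((hz1' i).and ((hz2' i).and h3)).exists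
    rw [← h1, ← h2]
    exact hagree (ψ k) i h3 hi
  have himg : φ z.1 = φ z.2 := by
    have h1 : Tendsto (fun k => φ (u (ψ k))) atTop (𝓝 (φ z.1)) :=
      ((hφ.1.tendsto z.1).comp hz1)
    have h2 : Tendsto (fun k => φ (v (ψ k))) atTop (𝓝 (φ z.2)) :=
      ((hφ.1.tendsto z.2).comp hz2)
    have he : (fun k => φ (u (ψ k))) = fun k => φ (v (ψ k)) := funext fun k => huv (ψ k)
    rw [he] at h1
    exact tendsto_nhds_unique h1 h2
  have hzz := hrc z.1 z.2 hla himg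
  obtain ⟨k, h1, h2⟩ := ((hz1' 1).and (hz2' 1)).exists
  exact hne (ψ k) (by rw [h1, h2, hzz])

lemma uniform_left_closing (hX : IsSubshift X) (φ : X → Y) (hφ : IsCode φ)
    (hlc : LeftClosing φ) :
    ∃ m : ℕ, ∀ x x' : X, φ x = φ x' →
      (∀ i : ℤ, 0 ≤ i → i ≤ (m : ℤ) → (x : ℤ → A') i = (x' : ℤ → A') i) →
      (x : ℤ → A') (-1) = (x' : ℤ → A') (-1) := by
  haveI : CompactSpace X := isCompact_iff_compactSpace.mp hX.1.isCompact
  by_contra hcon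
  push_neg at hcon
  choose u v huv hagree hne using hcon
  obtain ⟨z, ψ, hψ, hz⟩ := CompactSpace.tendsto_subseq (fun m => ((u m, v m) : X × X))
  have hz1 : Tendsto (fun k => u (ψ k)) atTop (𝓝 z.1) := (continuous_fst.tendsto z).comp hz
  have hz2 : Tendsto (fun k => v (ψ k)) atTop (𝓝 z.2) := (continuous_snd.tendsto z).comp hz
  have hz1' : ∀ i, ∀ᶠ k in atTop, ((u (ψ k) : ℤ → A')) i = (z.1 : ℤ → A') i :=
    tendsto_pi_discrete.mp (tendsto_subtype_rng.mp hz1)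
  have hz2' : ∀ i, ∀ᶠ k in atTop, ((v (ψ k) : ℤ → A')) i = (z.2 : ℤ → A') i :=
    tendsto_pi_discrete.mp (tendsto_subtype_rng.mp hz2)
  have hra : RightAsymptotic (z.1 : ℤ → A') (z.2 : ℤ → A') := by
    refine ⟨0, fun i hi => ?_⟩
    have h3 : ∀ᶠ k in atTop, i ≤ ((ψ k : ℕ) : ℤ) := by
      filter_upwards [eventually_ge_atTop i.natAbs] with k hk
      have := hψ.le_apply (x := k)
      omega
    obtain ⟨k, h1, h2, h3⟩ := ((hz1' i).and ((hz2' i).and h3)).exists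
    rw [← h1, ← h2]
    exact hagree (ψ k) i hi h3
  have himg : φ z.1 = φ z.2 := by
    have h1 : Tendsto (fun k => φ (u (ψ k))) atTop (𝓝 (φ z.1)) :=
      ((hφ.1.tendsto z.1).comp hz1)
    have h2 : Tendsto (fun k => φ (v (ψ k))) atTop (𝓝 (φ z.2)) :=
      ((hφ.1.tendsto z.2).comp hz2)
    have he : (fun k => φ (u (ψ k))) = fun k => φ (v (ψ k)) := funext fun k => huv (ψ k)
    rw [he] at h1
    exact tendsto_nhds_unique h1 h2
  have hzz := hlc z.1 z.2 hra himg
  obtain ⟨k, h1, h2⟩ := ((hz1' (-1)).and (hz2' (-1))).exists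
  exact hne (ψ k) (by rw [h1, h2, hzz])

lemma uniform_separation (hX : IsSubshift X) (φ : X → Y) (hφ : IsCode φ)
    (hbc : BiClosing φ) :
    ∃ n : ℕ, ∀ x x' : X, φ x = φ x' →
      (∀ i : ℤ, |i| ≤ (n : ℤ) → (x : ℤ → A') i = (x' : ℤ → A') i) → x = x' := by
  obtain ⟨m₁, hm₁⟩ := uniform_right_closing hX φ hφ hbc.1
  obtain ⟨m₂, hm₂⟩ := uniform_left_closing hX φ hφ hbc.2
  refine ⟨max m₁ m₂, fun x x' himg hagree => ?_⟩
  set n : ℕ := max m₁ m₂ with hn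
  have hn1 : (m₁ : ℤ) ≤ n := by exact_mod_cast le_max_left m₁ m₂
  have hn2 : (m₂ : ℤ) ≤ n := by exact_mod_cast le_max_right m₁ m₂
  have imgsh : ∀ k : ℤ, ∀ (h1 : zshift k (x : ℤ → A') ∈ X) (h2 : zshift k (x' : ℤ → A') ∈ X),
      φ ⟨zshift k (x : ℤ → A'), h1⟩ = φ ⟨zshift k (x' : ℤ → A'), h2⟩ := by
    intro k h1 h2
    apply Subtype.ext
    rw [code_zshift hX φ hφ k x h1, code_zshift hX φ hφ k x' h2, himg]
  have step_up : ∀ k : ℤ, (∀ i : ℤ, k - m₁ ≤ i → i ≤ k → (x : ℤ → A') i = (x' : ℤ → A') i) →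
      (x : ℤ → A') (k + 1) = (x' : ℤ → A') (k + 1) := by
    intro k hag
    have hmx : zshift k (x : ℤ → A') ∈ X := zshift_mem hX x.2 k
    have hmx' : zshift k (x' : ℤ → A') ∈ X := zshift_mem hX x'.2 k
    have h := hm₁ ⟨zshift k (x : ℤ → A'), hmx⟩ ⟨zshift k (x' : ℤ → A'), hmx'⟩
      (imgsh k hmx hmx') ?_
    · have e : (1 : ℤ) + k = k + 1 := by ring
      simpa [zshift, e] using h
    · intro i hi1 hi2
      show (x : ℤ → A') (i + k) = (x' : ℤ → A') (i + k)
      exact hag (i + k) (by omega) (by omega)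
  have step_down : ∀ k : ℤ, (∀ i : ℤ, k ≤ i → i ≤ k + m₂ → (x : ℤ → A') i = (x' : ℤ → A') i) →
      (x : ℤ → A') (k - 1) = (x' : ℤ → A') (k - 1) := by
    intro k hag
    have hmx : zshift k (x : ℤ → A') ∈ X := zshift_mem hX x.2 k
    have hmx' : zshift k (x' : ℤ → A') ∈ X := zshift_mem hX x'.2 k
    have h := hm₂ ⟨zshift k (x : ℤ → A'), hmx⟩ ⟨zshift k (x' : ℤ → A'), hmx'⟩
      (imgsh k hmx hmx') ?_
    · have e : (-1 : ℤ) + k = k - 1 := by ring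
      simpa [zshift, e] using h
    · intro i hi1 hi2
      show (x : ℤ → A') (i + k) = (x' : ℤ → A') (i + k)
      exact hag (i + k) (by omega) (by omega)
  have up : ∀ j : ℕ, ∀ i : ℤ, -(n : ℤ) ≤ i → i ≤ (n : ℤ) + j →
      (x : ℤ → A') i = (x' : ℤ → A') i := by
    intro j
    induction j with
    | zero => intro i h1 h2; exact hagree i (abs_le.mpr ⟨h1, by omega⟩)
    | succ j ih =>
      intro i h1 h2
      rcases lt_or_ge i ((n : ℤ) + j + 1) with h | h
      · exact ih i h1 (by omega)
      · have hie : i = (n : ℤ) + j + 1 := by push_cast at h2 ⊢; omega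
        have := step_up ((n : ℤ) + j) (fun i' h1' h2' => ih i' (by omega) (by omega))
        rw [hie]
        exact this
  have down : ∀ j : ℕ, ∀ i : ℤ, -(n : ℤ) - j ≤ i → i ≤ (n : ℤ) →
      (x : ℤ → A') i = (x' : ℤ → A') i := by
    intro j
    induction j with
    | zero => intro i h1 h2; exact hagree i (abs_le.mpr ⟨by omega, h2⟩)
    | succ j ih =>
      intro i h1 h2
      rcases lt_or_ge (-(n : ℤ) - j - 1) i with h | h
      · exact ih i (by omega) h2
      · have hie : i = -(n : ℤ) - j - 1 := by push_cast at h1 ⊢; omega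
        have := step_down (-(n : ℤ) - j) (fun i' h1' h2' => ih i' (by omega) (by omega))
        rw [hie]
        convert this using 2 <;> ring
  apply Subtype.ext; funext i
  rcases le_or_gt (-(n : ℤ)) i with h | h
  · exact up (i - n).toNat i h (by omega)
  · exact down (-(n : ℤ) - i).toNat i (by omega) (by omega)

lemma fiber_finite {φ : X → Y} {n : ℕ}
    (hsep : ∀ x x' : X, φ x = φ x' →
      (∀ i : ℤ, |i| ≤ (n : ℤ) → (x : ℤ → A') i = (x' : ℤ → A') i) → x = x')
    (y : Y) : (φ ⁻¹' {y}).Finite := by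
  haveI : Finite (Set.Icc (-(n : ℤ)) n) := (Set.finite_Icc _ _).to_subtype
  have hinj : Function.Injective
      (fun (x : ↥(φ ⁻¹' {y})) (i : Set.Icc (-(n : ℤ)) n) => ((x : X) : ℤ → A') i.1) := by
    intro a b h
    apply Subtype.ext
    apply hsep a.1 b.1
    · have ha : φ a.1 = y := a.2
      have hb : φ b.1 = y := b.2
      rw [ha, hb]
    · intro i hi
      exact congrFun h ⟨i, Set.mem_Icc.mpr (abs_le.mp hi)⟩
  exact Set.finite_coe_iff.mp (Finite.of_injective _ hinj)

lemma fiber_card_zshift (hX : IsSubshift X) (φ : X → Y) (hφ : IsCode φ)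
    (y : Y) (t : ℤ) (hm : zshift t (y : ℤ → B') ∈ Y) :
    Nat.card (φ ⁻¹' {(⟨zshift t (y : ℤ → B'), hm⟩ : Y)}) = Nat.card (φ ⁻¹' {y}) := by
  symm
  apply Nat.card_congr
  have mem1 : ∀ x : X, zshift t (x : ℤ → A') ∈ X := fun x => zshift_mem hX x.2 t
  have mem2 : ∀ x : X, zshift (-t) (x : ℤ → A') ∈ X := fun x => zshift_mem hX x.2 (-t)
  refine ⟨fun x => ⟨⟨zshift t ((x : X) : ℤ → A'), mem1 _⟩, ?_⟩,
          fun x => ⟨⟨zshift (-t) ((x : X) : ℤ → A'), mem2 _⟩, ?_⟩, ?_, ?_⟩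
  · have hx : φ (x : X) = y := x.2
    simp only [Set.mem_preimage, Set.mem_singleton_iff]
    apply Subtype.ext
    rw [code_zshift hX φ hφ t (x : X) (mem1 _), hx]
  · have hx : φ (x : X) = ⟨zshift t (y : ℤ → B'), hm⟩ := x.2
    simp only [Set.mem_preimage, Set.mem_singleton_iff]
    apply Subtype.ext
    rw [code_zshift hX φ hφ (-t) (x : X) (mem2 _), hx]
    show zshift (-t) (zshift t (y : ℤ → B')) = _
    rw [zshift_cancel]
  · intro x
    apply Subtype.ext; apply Subtype.ext
    show zshift (-t) (zshift t _) = _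
    rw [zshift_cancel]
  · intro x
    apply Subtype.ext; apply Subtype.ext
    show zshift t (zshift (-t) _) = _
    rw [zshift_zshift]; simp

lemma fiber_card_le_of_tendsto (hX : IsSubshift X) {φ : X → Y} (hφ : IsCode φ) {n : ℕ}
    (hsep : ∀ x x' : X, φ x = φ x' →
      (∀ i : ℤ, |i| ≤ (n : ℤ) → (x : ℤ → A') i = (x' : ℤ → A') i) → x = x')
    {k : ℕ} (ys : ℕ → Y) (y : Y)
    (hconv : Tendsto (fun m => ((ys m : ℤ → B'))) atTop (𝓝 (y : ℤ → B')))
    (hcard : ∀ m, k ≤ Nat.card (φ ⁻¹' {ys m})) :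
    k ≤ Nat.card (φ ⁻¹' {y}) := by
  haveI : CompactSpace X := isCompact_iff_compactSpace.mp hX.1.isCompact
  have hf : ∀ m, ∃ f : Fin k → ↥(φ ⁻¹' {ys m}), Function.Injective f := by
    intro m
    haveI : Finite ↥(φ ⁻¹' {ys m}) := (fiber_finite hsep (ys m)).to_subtype
    haveI := Fintype.ofFinite ↥(φ ⁻¹' {ys m})
    have hk : Fintype.card (Fin k) ≤ Fintype.card ↥(φ ⁻¹' {ys m}) := by
      rw [Fintype.card_fin, ← Nat.card_eq_fintype_card]
      exact hcard m
    obtain ⟨f⟩ := Function.Embedding.nonempty_of_card_le hk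
    exact ⟨f, f.injective⟩
  choose f hfinj using hf
  obtain ⟨z, ψ, hψ, hz⟩ :=
    CompactSpace.tendsto_subseq (fun m (j : Fin k) => ((f m j : X)))
  have hzj : ∀ j : Fin k, Tendsto (fun m => ((f (ψ m) j : X))) atTop (𝓝 (z j)) := by
    intro j
    exact tendsto_pi_nhds.mp hz j
  have hcoord : ∀ (j : Fin k) (i : ℤ),
      ∀ᶠ m in atTop, (((f (ψ m) j : X)) : ℤ → A') i = ((z j : X) : ℤ → A') i :=
    fun j => tendsto_pi_discrete.mp (tendsto_subtype_rng.mp (hzj j))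
  have hfib : ∀ j : Fin k, φ (z j) = y := by
    intro j
    have h1 : Tendsto (fun m => φ ((f (ψ m) j : X))) atTop (𝓝 (φ (z j))) :=
      (hφ.1.tendsto (z j)).comp (hzj j)
    have he : (fun m => φ ((f (ψ m) j : X))) = fun m => ys (ψ m) :=
      funext fun m => (f (ψ m) j).2
    rw [he] at h1
    have h2 : Tendsto (fun m => ys (ψ m)) atTop (𝓝 y) :=
      tendsto_subtype_rng.mpr (hconv.comp hψ.tendsto_atTop)
    exact tendsto_nhds_unique h1 h2
  have hzne : ∀ j j' : Fin k, j ≠ j' → z j ≠ z j' := by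
    intro j j' hne heq
    have hev : ∀ᶠ m in atTop, ∀ i ∈ Finset.Icc (-(n : ℤ)) n,
        (((f (ψ m) j : X)) : ℤ → A') i = (((f (ψ m) j' : X)) : ℤ → A') i := by
      rw [eventually_all_finset]
      intro i _
      filter_upwards [hcoord j i, hcoord j' i] with m h1 h2
      rw [h1, h2, heq]
    obtain ⟨m, hm⟩ := hev.exists
    have himg : φ ((f (ψ m) j : X)) = φ ((f (ψ m) j' : X)) := by
      have e1 : φ ((f (ψ m) j : X)) = ys (ψ m) := (f (ψ m) j).2
      have e2 : φ ((f (ψ m) j' : X)) = ys (ψ m) := (f (ψ m) j').2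
      rw [e1, e2]
    have := hsep _ _ himg fun i hi => hm i (Finset.mem_Icc.mpr (abs_le.mp hi))
    exact hne (hfinj (ψ m) (Subtype.ext this))
  have hg : Function.Injective (fun j : Fin k => (⟨z j, by
      rw [Set.mem_preimage, Set.mem_singleton_iff]; exact hfib j⟩ : ↥(φ ⁻¹' {y}))) := by
    intro j j' h
    by_contra hne
    exact hzne j j' hne (congrArg Subtype.val h)
  haveI : Finite ↥(φ ⁻¹' {y}) := (fiber_finite hsep y).to_subtype
  calc k = Nat.card (Fin k) := by simp
  _ ≤ Nat.card ↥(φ ⁻¹' {y}) := Nat.card_le_card_of_injective _ hg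

end Closing

lemma dt_approx {Y : Set (ℤ → B')} (y₀ y : ℤ → B') (hy₀ : y₀ ∈ Y)
    (hdt : DoublyTransitive Y y) :
    ∃ ts : ℕ → ℤ, ∀ (m : ℕ) (i : ℤ), |i| ≤ (m : ℤ) → zshift (ts m) y i = y₀ i := by
  have key : ∀ m : ℕ, ∃ t : ℤ, ∀ i : ℤ, |i| ≤ (m : ℤ) → zshift t y i = y₀ i := by
    intro m
    have hlen : (List.ofFn (fun i : Fin (2 * m + 1) => y₀ (-(m : ℤ) + i))).length
        = 2 * m + 1 := List.length_ofFn
    have hword : WordIn Y (List.ofFn (fun i : Fin (2 * m + 1) => y₀ (-(m : ℤ) + i))) := by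
      refine ⟨y₀, hy₀, -(m : ℤ), fun i => ?_⟩
      rw [List.get_ofFn]
      simp
    obtain ⟨⟨kk, _, hocc⟩, -⟩ := hdt _ hword 0
    refine ⟨kk + m, fun i hi => ?_⟩
    have habs := abs_le.mp hi
    have hlt : (i + m).toNat < (List.ofFn (fun i : Fin (2 * m + 1) => y₀ (-(m : ℤ) + i))).length := by
      rw [hlen]; omega
    have h1 := hocc ⟨(i + m).toNat, hlt⟩
    rw [List.get_ofFn] at h1
    simp only [Fin.cast_mk, Fin.val_mk] at h1
    have e1 : kk + (((i + m).toNat : ℕ) : ℤ) = i + (kk + m) := by omega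
    have e2 : -(m : ℤ) + (((i + m).toNat : ℕ) : ℤ) = i := by omega
    rw [e1, e2] at h1
    exact h1
  choose ts hts using key
  exact ⟨ts, hts⟩

end DegreeAux

theorem biclosing_factor_has_degree {A : Type*} {B : Type*} [Finite A] [TopologicalSpace A] [DiscreteTopology A]
    [Finite B] [TopologicalSpace B] [DiscreteTopology B]
    {X : Set (ℤ → A)} {Y : Set (ℤ → B)} (hX : IsSubshift X) (hY : IsSubshift Y)
    (φ : X → Y) (hφ : IsCode φ)
    (hsurj : Function.Surjective φ) (hbc : BiClosing φ)
    (hYirr : IrreducibleSubshift Y) :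
    ∃ d : ℕ, 0 < d ∧
      (∀ y : Y, DoublyTransitive Y y.1 →
        (φ ⁻¹' {y}).Finite ∧ Nat.card (φ ⁻¹' {y}) = d) ∧
      (∀ y : Y, ∃ S : Finset X, S.card = d ∧ ∀ x ∈ S, φ x = y) := by
  rcases isEmpty_or_nonempty (↥Y) with hYe | hYne
  · exact ⟨1, one_pos, fun y => (hYe.false y).elim, fun y => (hYe.false y).elim⟩
  · obtain ⟨n, hsep⟩ := uniform_separation hX φ hφ hbc
    have hfin : ∀ y : Y, (φ ⁻¹' {y}).Finite := fun y => fiber_finite hsep y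
    have hSne : (Set.range (fun y : Y => Nat.card (φ ⁻¹' {y}))).Nonempty :=
      Set.range_nonempty _
    set S : Set ℕ := Set.range (fun y : Y => Nat.card (φ ⁻¹' {y})) with hS
    obtain ⟨y₀, hy₀⟩ := Nat.sInf_mem hSne
    have hy₀' : Nat.card (φ ⁻¹' {y₀}) = sInf S := hy₀
    have hlb : ∀ y : Y, sInf S ≤ Nat.card (φ ⁻¹' {y}) := fun y => Nat.sInf_le ⟨y, rfl⟩
    have hpos : 0 < sInf S := by
      obtain ⟨x, hx⟩ := hsurj y₀
      haveI := (hfin y₀).to_subtype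
      haveI : Nonempty ↥(φ ⁻¹' {y₀}) := ⟨⟨x, by simp [hx]⟩⟩
      rw [← hy₀']
      exact Nat.card_pos
    refine ⟨sInf S, hpos, fun y hdt => ⟨hfin y, ?_⟩, fun y => ?_⟩
    · refine le_antisymm ?_ (hlb y)
      by_contra hgt
      push_neg at hgt
      obtain ⟨ts, hts⟩ := dt_approx (y₀ : ℤ → B) (y : ℤ → B) y₀.2 hdt
      have hconv : Tendsto (fun m => zshift (ts m) (y : ℤ → B)) atTop (nhds (y₀ : ℤ → B)) := by
        rw [tendsto_pi_discrete]
        intro i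
        filter_upwards [eventually_ge_atTop i.natAbs] with m hm
        exact hts m i (by rw [Int.abs_eq_natAbs]; omega)
      have hcard : ∀ m, sInf S + 1 ≤ Nat.card
          (φ ⁻¹' {(⟨zshift (ts m) (y : ℤ → B), zshift_mem hY y.2 (ts m)⟩ : Y)}) := by
        intro m
        rw [fiber_card_zshift hX φ hφ y (ts m) (zshift_mem hY y.2 (ts m))]
        omega
      have hle := fiber_card_le_of_tendsto hX hφ hsep
        (fun m => (⟨zshift (ts m) (y : ℤ → B), zshift_mem hY y.2 (ts m)⟩ : Y)) y₀ hconv hcard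
      omega
    · have hcard' : (hfin y).toFinset.card = Nat.card (φ ⁻¹' {y}) := by
        rw [Nat.card_coe_set_eq, Set.ncard_eq_toFinset_card _ (hfin y)]
      obtain ⟨T, hTsub, hTcard⟩ := Finset.exists_subset_card_eq
        (show sInf S ≤ (hfin y).toFinset.card by rw [hcard']; exact hlb y)
      refine ⟨T, hTcard, fun x hx => ?_⟩
      have hmem := hTsub hx
      rw [Set.Finite.mem_toFinset] at hmem
      exact hmem
end

section
/- Let φ : X → Y be an open code between shift spaces with Y irreducible. If φ is bi-closing, then φ is constant-to-one (every fiber has the same finite cardinality). -/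
open Set Function Filter

variable {A : Type*} {B : Type*} {C : Type*}

namespace CTO
variable {A : Type*} {B : Type*}

def translate (k : ℤ) (x : ℤ → A) : ℤ → A := fun i => x (i + k)

lemma translate_apply (k : ℤ) (x : ℤ → A) (i : ℤ) : translate k x i = x (i + k) := rfl

lemma translate_translate (k l : ℤ) (x : ℤ → A) :
    translate k (translate l x) = translate (k + l) x := by
  funext i; simp [translate, add_assoc]

lemma continuous_translate [TopologicalSpace A] (k : ℤ) :
    Continuous (translate k : (ℤ → A) → (ℤ → A)) :=
  continuous_pi fun i => continuous_apply _

lemma shiftMap_mem' [TopologicalSpace A] {X : Set (ℤ → A)} (hX : IsSubshift X)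
    {x : ℤ → A} (hx : x ∈ X) : shiftMap x ∈ X := by
  have h : shiftMap x ∈ shiftMap '' X := Set.mem_image_of_mem _ hx
  rwa [hX.2] at h

lemma translate_mem [TopologicalSpace A] {X : Set (ℤ → A)} (hX : IsSubshift X)
    (k : ℤ) {x : ℤ → A} (hx : x ∈ X) : translate k x ∈ X := by
  induction k using Int.induction_on with
  | zero =>
      have : translate 0 x = x := by funext j; simp [translate]
      rwa [this]
  | succ i ih =>
      have : translate ((i : ℤ) + 1) x = shiftMap (translate i x) := by
        funext j; simp [translate, shiftMap]; ring_nf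
      rw [this, ← hX.2]
      exact Set.mem_image_of_mem _ ih
  | pred i ih =>
      have h := ih
      rw [← hX.2] at h
      obtain ⟨z, hz, hzz⟩ := h
      have : z = translate (-(i : ℤ) - 1) x := by
        funext j
        have : z j = shiftMap z (j - 1) := by simp [shiftMap]
        rw [this, hzz]
        simp [translate, shiftMap]; ring_nf
      rwa [this] at hz

variable [TopologicalSpace A] [TopologicalSpace B]
variable {X : Set (ℤ → A)} {Y : Set (ℤ → B)}

/-- translate as a map on the subshift. -/
def translateS (hX : IsSubshift X) (k : ℤ) (x : X) : X :=
  ⟨translate k (x : ℤ → A), translate_mem hX k x.2⟩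

lemma translateS_val (hX : IsSubshift X) (k : ℤ) (x : X) :
    (translateS hX k x : ℤ → A) = translate k (x : ℤ → A) := rfl

lemma code_translate (hX : IsSubshift X) (hY : IsSubshift Y) {φ : X → Y}
    (hφ : IsCode φ) (k : ℤ) (x : X) :
    ((φ (translateS hX k x) : Y) : ℤ → B) = translate k ((φ x : Y) : ℤ → B) := by
  induction k using Int.induction_on with
  | zero =>
      have h1 : translateS hX 0 x = x := by
        apply Subtype.ext; funext j; simp [translateS, translate]
      rw [h1]; funext j; simp [translate]
  | succ i ih =>
      have hmem : shiftMap ((translateS hX i x : X) : ℤ → A) ∈ X :=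
        shiftMap_mem' hX (translateS hX i x).2
      have h1 : translateS hX ((i : ℤ) + 1) x
          = ⟨shiftMap ((translateS hX i x : X) : ℤ → A), hmem⟩ := by
        apply Subtype.ext; funext j
        show (x : ℤ → A) (j + ((i : ℤ) + 1)) = (x : ℤ → A) (j + 1 + i)
        ring_nf
      rw [h1, hφ.2 _ hmem, ih]
      funext j; simp [shiftMap, translate]; ring_nf
  | pred i ih =>
      set x' := translateS hX (-(i : ℤ) - 1) x with hx'
      have hmem : shiftMap ((x' : X) : ℤ → A) ∈ X :=
        shiftMap_mem' hX x'.2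
      have h1 : translateS hX (-(i : ℤ)) x = ⟨shiftMap ((x' : X) : ℤ → A), hmem⟩ := by
        apply Subtype.ext; funext j
        show (x : ℤ → A) (j + -(i : ℤ)) = (x : ℤ → A) (j + 1 + (-(i:ℤ) - 1))
        ring_nf
      have h2 := hφ.2 x' hmem
      rw [← h1] at h2
      -- h2 : φ(translateS (-i)) = shiftMap (φ x')
      have h3 : shiftMap ((φ x' : Y) : ℤ → B) = translate (-(i:ℤ)) ((φ x : Y) : ℤ → B) := by
        rw [← h2, ih]
      funext j
      have := congrFun h3 (j - 1)
      simp [shiftMap] at this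
      rw [translate_apply, show j + (-(i:ℤ) - 1) = j - 1 + -(i:ℤ) by ring]
      exact this

variable [Finite A] [DiscreteTopology A] [Finite B] [DiscreteTopology B]
lemma exists_uniform_right (hX : IsSubshift X) {φ : X → Y}
    (hφ : IsCode φ) (hrc : RightClosing φ) :
    ∃ N : ℕ, ∀ x x' : X, φ x = φ x' →
      (∀ i : ℤ, -(N : ℤ) ≤ i → i ≤ 0 → (x : ℤ → A) i = (x' : ℤ → A) i) →
      (x : ℤ → A) 1 = (x' : ℤ → A) 1 := by
  by_contra hcon
  push_neg at hcon
  set K : ℕ → Set (X × X) := fun N =>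
    {p | φ p.1 = φ p.2 ∧ (p.1 : ℤ → A) 1 ≠ (p.2 : ℤ → A) 1} ∩
      ⋂ i ∈ Finset.Icc (-(N : ℤ)) 0, {p | (p.1 : ℤ → A) i = (p.2 : ℤ → A) i} with hK
  haveI : CompactSpace X := isCompact_iff_compactSpace.mp hX.1.isCompact
  have hc1 : ∀ (i : ℤ), Continuous fun p : X × X => (p.1 : ℤ → A) i :=
    fun i => (continuous_apply i).comp (continuous_subtype_val.comp continuous_fst)
  have hc2 : ∀ (i : ℤ), Continuous fun p : X × X => (p.2 : ℤ → A) i :=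
    fun i => (continuous_apply i).comp (continuous_subtype_val.comp continuous_snd)
  have hKcl : ∀ N, IsClosed (K N) := by
    intro N
    apply IsClosed.inter
    · apply IsClosed.inter
      · exact isClosed_eq (hφ.1.comp continuous_fst) (hφ.1.comp continuous_snd)
      · have : IsOpen {p : X × X | (p.1 : ℤ → A) 1 = (p.2 : ℤ → A) 1} := by
          have : {p : X × X | (p.1 : ℤ → A) 1 = (p.2 : ℤ → A) 1} =
              (fun p : X × X => ((p.1 : ℤ → A) 1, (p.2 : ℤ → A) 1)) ⁻¹' {q : A × A | q.1 = q.2} := rfl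
          rw [this]
          exact (isOpen_discrete _).preimage ((hc1 1).prodMk (hc2 1))
        exact this.isClosed_compl
    · exact isClosed_biInter fun i _ => isClosed_eq (hc1 i) (hc2 i)
  have hKne : ∀ N, (K N).Nonempty := by
    intro N
    obtain ⟨x, x', h1, h2, h3⟩ := hcon N
    refine ⟨(x, x'), ⟨⟨h1, h3⟩, ?_⟩⟩
    simp only [Set.mem_iInter]
    intro i hi
    simp only [Finset.mem_Icc] at hi
    exact h2 i hi.1 hi.2
  have hKmono : ∀ N, K (N + 1) ⊆ K N := by
    intro N p hp
    refine ⟨hp.1, ?_⟩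
    have h2 := hp.2
    simp only [Set.mem_iInter] at h2 ⊢
    intro i hi
    apply h2
    simp only [Finset.mem_Icc] at hi ⊢
    omega
  have hne : (⋂ N, K N).Nonempty :=
    IsCompact.nonempty_iInter_of_sequence_nonempty_isCompact_isClosed K hKmono hKne
      ((hKcl 0).isCompact) hKcl
  obtain ⟨p, hp⟩ := hne
  simp only [Set.mem_iInter] at hp
  have hasym : LeftAsymptotic (p.1 : ℤ → A) (p.2 : ℤ → A) := by
    refine ⟨0, fun i hi => ?_⟩
    have := (hp (i.natAbs)).2
    simp only [Set.mem_iInter] at this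
    apply this
    simp only [Finset.mem_Icc]
    omega
  have := hrc p.1 p.2 hasym (hp 0).1.1
  exact (hp 0).1.2 (by rw [this])

lemma exists_uniform_left (hX : IsSubshift X) {φ : X → Y}
    (hφ : IsCode φ) (hlc : LeftClosing φ) :
    ∃ N : ℕ, ∀ x x' : X, φ x = φ x' →
      (∀ i : ℤ, 0 ≤ i → i ≤ (N : ℤ) → (x : ℤ → A) i = (x' : ℤ → A) i) →
      (x : ℤ → A) (-1) = (x' : ℤ → A) (-1) := by
  by_contra hcon
  push_neg at hcon
  set K : ℕ → Set (X × X) := fun N =>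
    {p | φ p.1 = φ p.2 ∧ (p.1 : ℤ → A) (-1) ≠ (p.2 : ℤ → A) (-1)} ∩
      ⋂ i ∈ Finset.Icc (0 : ℤ) (N : ℤ), {p | (p.1 : ℤ → A) i = (p.2 : ℤ → A) i} with hK
  haveI : CompactSpace X := isCompact_iff_compactSpace.mp hX.1.isCompact
  have hc1 : ∀ (i : ℤ), Continuous fun p : X × X => (p.1 : ℤ → A) i :=
    fun i => (continuous_apply i).comp (continuous_subtype_val.comp continuous_fst)
  have hc2 : ∀ (i : ℤ), Continuous fun p : X × X => (p.2 : ℤ → A) i :=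
    fun i => (continuous_apply i).comp (continuous_subtype_val.comp continuous_snd)
  have hKcl : ∀ N, IsClosed (K N) := by
    intro N
    apply IsClosed.inter
    · apply IsClosed.inter
      · exact isClosed_eq (hφ.1.comp continuous_fst) (hφ.1.comp continuous_snd)
      · have : IsOpen {p : X × X | (p.1 : ℤ → A) (-1) = (p.2 : ℤ → A) (-1)} := by
          have : {p : X × X | (p.1 : ℤ → A) (-1) = (p.2 : ℤ → A) (-1)} =
              (fun p : X × X => ((p.1 : ℤ → A) (-1), (p.2 : ℤ → A) (-1))) ⁻¹' {q : A × A | q.1 = q.2} := rfl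
          rw [this]
          exact (isOpen_discrete _).preimage ((hc1 (-1)).prodMk (hc2 (-1)))
        exact this.isClosed_compl
    · exact isClosed_biInter fun i _ => isClosed_eq (hc1 i) (hc2 i)
  have hKne : ∀ N, (K N).Nonempty := by
    intro N
    obtain ⟨x, x', h1, h2, h3⟩ := hcon N
    refine ⟨(x, x'), ⟨⟨h1, h3⟩, ?_⟩⟩
    simp only [Set.mem_iInter]
    intro i hi
    simp only [Finset.mem_Icc] at hi
    exact h2 i hi.1 hi.2
  have hKmono : ∀ N, K (N + 1) ⊆ K N := by
    intro N p hp
    refine ⟨hp.1, ?_⟩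
    have h2 := hp.2
    simp only [Set.mem_iInter] at h2 ⊢
    intro i hi
    apply h2
    simp only [Finset.mem_Icc] at hi ⊢
    omega
  have hne : (⋂ N, K N).Nonempty :=
    IsCompact.nonempty_iInter_of_sequence_nonempty_isCompact_isClosed K hKmono hKne
      ((hKcl 0).isCompact) hKcl
  obtain ⟨p, hp⟩ := hne
  simp only [Set.mem_iInter] at hp
  have hasym : RightAsymptotic (p.1 : ℤ → A) (p.2 : ℤ → A) := by
    refine ⟨0, fun i hi => ?_⟩
    have := (hp (i.natAbs)).2
    simp only [Set.mem_iInter] at this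
    apply this
    simp only [Finset.mem_Icc]
    omega
  have := hlc p.1 p.2 hasym (hp 0).1.1
  exact (hp 0).1.2 (by rw [this])

lemma exists_sep (hX : IsSubshift X) (hY : IsSubshift Y) {φ : X → Y}
    (hφ : IsCode φ) (hbc : BiClosing φ) :
    ∃ M : ℕ, ∀ x x' : X, φ x = φ x' →
      (∀ i : ℤ, |i| ≤ (M : ℤ) → (x : ℤ → A) i = (x' : ℤ → A) i) → x = x' := by
  obtain ⟨N, hN⟩ := exists_uniform_right hX hφ hbc.1
  obtain ⟨N', hN'⟩ := exists_uniform_left hX hφ hbc.2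
  refine ⟨max N N', fun x x' hfib hagree => ?_⟩
  have hmax1 : (N : ℤ) ≤ (max N N' : ℕ) := by exact_mod_cast le_max_left N N'
  have hmax2 : (N' : ℤ) ≤ (max N N' : ℕ) := by exact_mod_cast le_max_right N N'
  -- rightward propagation
  have hfib' : ∀ k : ℤ, φ (translateS hX k x) = φ (translateS hX k x') := by
    intro k
    apply Subtype.ext
    rw [code_translate hX hY hφ, code_translate hX hY hφ, hfib]
  have hright : ∀ k : ℕ, ∀ i : ℤ, -(N : ℤ) ≤ i → i ≤ (k : ℤ) →
      (x : ℤ → A) i = (x' : ℤ → A) i := by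
    intro k
    induction k with
    | zero => intro i h1 h2; exact hagree i (by rw [abs_le]; omega)
    | succ k ih =>
        intro i h1 h2
        rcases le_or_gt i (k : ℤ) with h | h
        · exact ih i h1 h
        · have hi : i = (k : ℤ) + 1 := by omega
          have := hN (translateS hX k x) (translateS hX k x') (hfib' k) ?_
          · rw [translateS_val, translateS_val, translate_apply, translate_apply] at this
            rw [hi]; rw [show (k:ℤ) + 1 = 1 + k by ring]; exact this
          · intro j hj1 hj2
            rw [translateS_val, translateS_val, translate_apply, translate_apply]
            exact ih (j + k) (by omega) (by omega)
  have hleft : ∀ k : ℕ, ∀ i : ℤ, -(k : ℤ) ≤ i → i ≤ (N' : ℤ) →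
      (x : ℤ → A) i = (x' : ℤ → A) i := by
    intro k
    induction k with
    | zero => intro i h1 h2; exact hagree i (by rw [abs_le]; omega)
    | succ k ih =>
        intro i h1 h2
        rcases le_or_gt (-(k : ℤ)) i with h | h
        · exact ih i h h2
        · have hi : i = -((k : ℤ) + 1) := by omega
          have := hN' (translateS hX (-(k:ℤ)) x) (translateS hX (-(k:ℤ)) x') (hfib' _) ?_
          · rw [translateS_val, translateS_val, translate_apply, translate_apply] at this
            rw [hi]; rw [show -((k:ℤ) + 1) = -1 + -(k:ℤ) by ring]; exact this
          · intro j hj1 hj2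
            rw [translateS_val, translateS_val, translate_apply, translate_apply]
            exact ih (j + -(k:ℤ)) (by omega) (by omega)
  apply Subtype.ext
  funext i
  rcases le_or_gt i (N' : ℤ) with h | h
  · exact hleft i.natAbs i (by omega) h
  · exact hright i.natAbs i (by omega) (by omega)



/-- Window agreement set. -/
def fibSet (φ : X → Y) (m : ℕ) : Set Y :=
  {y | ∃ f : Fin m → X, Function.Injective f ∧ ∀ j, φ (f j) = y}

variable {φ : X → Y} {M : ℕ}

/-- separation hypothesis abbreviation -/
def SepAt (φ : X → Y) (M : ℕ) : Prop :=
  ∀ x x' : X, φ x = φ x' →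
    (∀ i : ℤ, |i| ≤ (M : ℤ) → (x : ℤ → A) i = (x' : ℤ → A) i) → x = x'

lemma fiber_finite (hsep : SepAt φ M) (y : Y) : (φ ⁻¹' {y}).Finite := by
  have hinj : Function.Injective
      (fun x : ↥(φ ⁻¹' {y}) => fun i : Finset.Icc (-(M:ℤ)) (M:ℤ) => ((x : X) : ℤ → A) (i : ℤ)) := by
    intro x x' h
    have hfib : φ (x : X) = φ (x' : X) := by
      have h1 : φ (x : X) = y := x.2
      have h2 : φ (x' : X) = y := x'.2
      rw [h1, h2]
    have := hsep (x : X) (x' : X) hfib ?_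
    · exact Subtype.ext this
    · intro i hi
      have hmem : i ∈ Finset.Icc (-(M:ℤ)) (M:ℤ) := by
        simp only [Finset.mem_Icc]; rw [abs_le] at hi; exact hi
      exact congrFun h ⟨i, hmem⟩
  haveI : Finite ↥(φ ⁻¹' {y}) := Finite.of_injective _ hinj
  exact Set.toFinite _

lemma fibSet_isOpen (hopen : IsOpenMap φ) (hsep : SepAt φ M) (m : ℕ) :
    IsOpen (fibSet φ m) := by
  rw [isOpen_iff_mem_nhds]
  rintro y ⟨f, hinj, hf⟩
  set U : Fin m → Set X := fun j =>
    {x : X | ∀ i ∈ Finset.Icc (-(M:ℤ)) (M:ℤ), (x : ℤ → A) i = ((f j : X) : ℤ → A) i} with hU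
  have hUopen : ∀ j, IsOpen (U j) := by
    intro j
    have : U j = ⋂ i ∈ Finset.Icc (-(M:ℤ)) (M:ℤ),
        {x : X | (x : ℤ → A) i = ((f j : X) : ℤ → A) i} := by
      ext x; simp [hU]
    rw [this]
    apply isOpen_biInter_finset
    intro i _
    have hc : Continuous (fun x : X => (x : ℤ → A) i) :=
      (continuous_apply i).comp continuous_subtype_val
    exact (isOpen_discrete ({((f j : X) : ℤ → A) i} : Set A)).preimage hc
  have hmemU : ∀ j, f j ∈ U j := fun j i _ => rfl
  have hV : IsOpen (⋂ j, φ '' U j) := isOpen_iInter_of_finite fun j => hopen _ (hUopen j)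
  have hyV : y ∈ ⋂ j, φ '' U j := by
    refine Set.mem_iInter.mpr fun j => ⟨f j, hmemU j, hf j⟩
  refine Filter.mem_of_superset (hV.mem_nhds hyV) ?_
  intro y' hy'
  have := Set.mem_iInter.mp hy'
  choose g hg1 hg2 using fun j => this j
  refine ⟨g, ?_, hg2⟩
  intro j j' hjj
  by_contra hne
  apply hne
  apply hinj
  apply hsep _ _ (by rw [hf j, hf j'])
  intro i hi
  have hmem : i ∈ Finset.Icc (-(M:ℤ)) (M:ℤ) := by
    simp only [Finset.mem_Icc]; rw [abs_le] at hi; exact hi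
  rw [← hg1 j i hmem, hjj, hg1 j' i hmem]

lemma fibSet_isClosed (hX : IsSubshift X) (hY : IsSubshift Y) (hsep : SepAt φ M)
    (hφc : Continuous φ) (m : ℕ) : IsClosed (fibSet φ m) := by
  haveI : CompactSpace X := isCompact_iff_compactSpace.mp hX.1.isCompact
  set T : Set (Y × (Fin m → X)) :=
    {p | (∀ j, φ (p.2 j) = p.1) ∧ ∀ j j', j ≠ j' →
      ∃ i ∈ Finset.Icc (-(M:ℤ)) (M:ℤ), ((p.2 j : X) : ℤ → A) i ≠ ((p.2 j' : X) : ℤ → A) i} with hT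
  have hTclosed : IsClosed T := by
    have h1 : IsClosed {p : Y × (Fin m → X) | ∀ j, φ (p.2 j) = p.1} := by
      have : {p : Y × (Fin m → X) | ∀ j, φ (p.2 j) = p.1} =
          ⋂ j, {p : Y × (Fin m → X) | φ (p.2 j) = p.1} := by ext p; simp
      rw [this]
      exact isClosed_iInter fun j =>
        isClosed_eq (hφc.comp ((continuous_apply j).comp continuous_snd)) continuous_fst
    have h2 : IsClosed {p : Y × (Fin m → X) | ∀ j j', j ≠ j' →
        ∃ i ∈ Finset.Icc (-(M:ℤ)) (M:ℤ), ((p.2 j : X) : ℤ → A) i ≠ ((p.2 j' : X) : ℤ → A) i} := by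
      have : {p : Y × (Fin m → X) | ∀ j j', j ≠ j' →
          ∃ i ∈ Finset.Icc (-(M:ℤ)) (M:ℤ), ((p.2 j : X) : ℤ → A) i ≠ ((p.2 j' : X) : ℤ → A) i}
          = ⋂ j, ⋂ j', {p : Y × (Fin m → X) | j ≠ j' →
            ∃ i ∈ Finset.Icc (-(M:ℤ)) (M:ℤ), ((p.2 j : X) : ℤ → A) i ≠ ((p.2 j' : X) : ℤ → A) i} := by
        ext p; simp
      rw [this]
      refine isClosed_iInter fun j => isClosed_iInter fun j' => ?_
      by_cases hjj : j = j'
      · have : {p : Y × (Fin m → X) | j ≠ j' →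
            ∃ i ∈ Finset.Icc (-(M:ℤ)) (M:ℤ), ((p.2 j : X) : ℤ → A) i ≠ ((p.2 j' : X) : ℤ → A) i}
            = Set.univ := by
          ext p; simp [hjj]
        rw [this]; exact isClosed_univ
      · have heq : {p : Y × (Fin m → X) | j ≠ j' →
            ∃ i ∈ Finset.Icc (-(M:ℤ)) (M:ℤ), ((p.2 j : X) : ℤ → A) i ≠ ((p.2 j' : X) : ℤ → A) i}
            = (⋂ i ∈ Finset.Icc (-(M:ℤ)) (M:ℤ),
              {p : Y × (Fin m → X) | ((p.2 j : X) : ℤ → A) i = ((p.2 j' : X) : ℤ → A) i})ᶜ := by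
          ext p
          simp only [Set.mem_setOf_eq, Set.mem_compl_iff, Set.mem_iInter, not_forall]
          constructor
          · rintro h; obtain ⟨i, hi, hne⟩ := h hjj; exact ⟨i, hi, hne⟩
          · rintro ⟨i, hi, hne⟩ _; exact ⟨i, hi, hne⟩
        rw [heq]
        have hopen : IsOpen (⋂ i ∈ Finset.Icc (-(M:ℤ)) (M:ℤ),
            {p : Y × (Fin m → X) | ((p.2 j : X) : ℤ → A) i = ((p.2 j' : X) : ℤ → A) i}) := by
          apply isOpen_biInter_finset
          intro i _
          have : {p : Y × (Fin m → X) | ((p.2 j : X) : ℤ → A) i = ((p.2 j' : X) : ℤ → A) i}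
              = (fun p : Y × (Fin m → X) => (((p.2 j : X) : ℤ → A) i, ((p.2 j' : X) : ℤ → A) i))
                ⁻¹' {q : A × A | q.1 = q.2} := rfl
          rw [this]
          refine (isOpen_discrete _).preimage (Continuous.prodMk ?_ ?_)
          · exact (continuous_apply i).comp
              (continuous_subtype_val.comp ((continuous_apply j).comp continuous_snd))
          · exact (continuous_apply i).comp
              (continuous_subtype_val.comp ((continuous_apply j').comp continuous_snd))
        exact hopen.isClosed_compl
    have : T = {p : Y × (Fin m → X) | ∀ j, φ (p.2 j) = p.1} ∩
        {p : Y × (Fin m → X) | ∀ j j', j ≠ j' →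
          ∃ i ∈ Finset.Icc (-(M:ℤ)) (M:ℤ), ((p.2 j : X) : ℤ → A) i ≠ ((p.2 j' : X) : ℤ → A) i} := by
      ext p; simp only [hT, Set.mem_setOf_eq, Set.mem_inter_iff]
    rw [this]
    exact h1.inter h2
  haveI : CompactSpace Y := isCompact_iff_compactSpace.mp hY.1.isCompact
  have hTcompact : IsCompact T := hTclosed.isCompact
  have himage : fibSet φ m = Prod.fst '' T := by
    ext y
    constructor
    · rintro ⟨f, hinj, hf⟩
      refine ⟨(y, f), ⟨hf, ?_⟩, rfl⟩
      intro j j' hjj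
      by_contra hcon
      push_neg at hcon
      apply hjj
      apply hinj
      apply hsep _ _ (by rw [hf j, hf j'])
      intro i hi
      apply hcon
      simp only [Finset.mem_Icc]; rw [abs_le] at hi; exact hi
    · rintro ⟨⟨y', f⟩, ⟨hf, hdiff⟩, rfl⟩
      refine ⟨f, ?_, hf⟩
      intro j j' hjj
      by_contra hne
      obtain ⟨i, _, hi⟩ := hdiff j j' hne
      exact hi (congrFun (congrArg Subtype.val hjj) i)
  rw [himage]
  exact (hTcompact.image continuous_fst).isClosed

lemma fibSet_translate (hX : IsSubshift X) (hY : IsSubshift Y) (hφ : IsCode φ)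
    (m : ℕ) (k : ℤ) {y : Y} (hy : y ∈ fibSet φ m) : translateS hY k y ∈ fibSet φ m := by
  obtain ⟨f, hinj, hf⟩ := hy
  refine ⟨fun j => translateS hX k (f j), ?_, ?_⟩
  · intro j j' h
    apply hinj
    apply Subtype.ext
    have hval := congrArg (Subtype.val) h
    rw [translateS_val, translateS_val] at hval
    funext i
    have := congrFun hval (i - k)
    rw [translate_apply, translate_apply] at this
    simpa [sub_add_cancel] using this
  · intro j
    apply Subtype.ext
    rw [code_translate hX hY hφ, translateS_val, hf]



lemma open_cylinder {C : Set Y} (hC : IsOpen C) {y : Y} (hy : y ∈ C) :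
    ∃ n : ℕ, ∀ z : Y, (∀ i : ℤ, |i| ≤ (n : ℤ) → (z : ℤ → B) i = (y : ℤ → B) i) → z ∈ C := by
  obtain ⟨U, hUopen, hUC⟩ := isOpen_induced_iff.mp hC
  have hyU : (y : ℤ → B) ∈ U := by rw [← hUC] at hy; exact hy
  obtain ⟨I, u, h1, h2⟩ := isOpen_pi_iff.mp hUopen _ hyU
  refine ⟨I.sup Int.natAbs, fun z hz => ?_⟩
  have hzU : (z : ℤ → B) ∈ U := by
    apply h2
    intro a ha
    have : (z : ℤ → B) a = (y : ℤ → B) a := by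
      apply hz
      rw [Int.abs_eq_natAbs]
      exact_mod_cast Finset.le_sup (f := Int.natAbs) ha
    rw [this]
    exact (h1 a ha).2
  rw [← hUC]
  exact hzU

/-- The central word of radius n around a point. -/
def centralWord (n : ℕ) (y : ℤ → B) : List B :=
  List.ofFn (fun i : Fin (2 * n + 1) => y ((i : ℕ) - (n : ℤ)))

lemma centralWord_length (n : ℕ) (y : ℤ → B) : (centralWord n y).length = 2 * n + 1 := by
  simp [centralWord]

lemma centralWord_occursAt (n : ℕ) (y : ℤ → B) : OccursAt y (-(n : ℤ)) (centralWord n y) := by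
  intro i
  rw [List.get_eq_getElem]
  simp only [centralWord, List.getElem_ofFn]
  congr 1
  push_cast
  ring

lemma wordIn_centralWord {Y : Set (ℤ → B)} {y : ℤ → B} (hy : y ∈ Y) (n : ℕ) :
    WordIn Y (centralWord n y) :=
  ⟨y, hy, -(n : ℤ), centralWord_occursAt n y⟩

lemma occursAt_append_left {x : ℤ → B} {k : ℤ} {u v : List B}
    (h : OccursAt x k (u ++ v)) : OccursAt x k u := by
  intro i
  have hlt : (i : ℕ) < (u ++ v).length := by
    rw [List.length_append]; omega
  have h2 := h ⟨(i : ℕ), hlt⟩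
  rw [List.get_eq_getElem] at h2
  rw [List.get_eq_getElem]
  have h3 : x (k + ((i : ℕ) : ℤ)) = (u ++ v)[(i : ℕ)] := h2
  rw [h3]
  exact List.getElem_append_left i.2

lemma occursAt_append_right {x : ℤ → B} {k : ℤ} {u v : List B}
    (h : OccursAt x k (u ++ v)) : OccursAt x (k + u.length) v := by
  intro i
  have hlt : u.length + (i : ℕ) < (u ++ v).length := by
    rw [List.length_append]; omega
  have h2 := h ⟨u.length + (i : ℕ), hlt⟩
  rw [List.get_eq_getElem] at h2
  rw [List.get_eq_getElem]
  have h3 : x (k + ((u.length + (i : ℕ) : ℕ) : ℤ)) = (u ++ v)[u.length + (i : ℕ)] := h2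
  have harith : k + (u.length : ℤ) + ((i : ℕ) : ℤ) = k + ((u.length + (i : ℕ) : ℕ) : ℤ) := by
    push_cast; ring
  rw [harith, h3]
  rw [List.getElem_append_right (by omega)]
  congr 1
  omega



lemma centralWord_get (n : ℕ) (y : ℤ → B) (i : Fin (centralWord n y).length) :
    (centralWord n y).get i = y (((i : ℕ) : ℤ) - n) := by
  rw [List.get_eq_getElem]
  simp only [centralWord, List.getElem_ofFn]

lemma occurs_translate {z : ℤ → B} {k : ℤ} {n : ℕ} {y : ℤ → B}
    (h : OccursAt z k (centralWord n y)) :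
    ∀ i : ℤ, |i| ≤ (n : ℤ) → translate (k + n) z i = y i := by
  intro i hi
  have habs : -(n : ℤ) ≤ i ∧ i ≤ n := abs_le.mp hi
  have hj : ((i + n).toNat) < (centralWord n y).length := by
    rw [centralWord_length]; omega
  have h2 := h ⟨(i + n).toNat, hj⟩
  rw [centralWord_get] at h2
  rw [translate_apply]
  have e1 : i + (k + n) = k + ((((i + (n:ℤ)).toNat) : ℕ) : ℤ) := by omega
  have e2 : ((((i + (n:ℤ)).toNat) : ℕ) : ℤ) - n = i := by omega
  rw [e1, h2, e2]

lemma clopen_inv_univ (hY : IsSubshift Y) (hYirr : IrreducibleSubshift Y)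
    {C : Set Y} (hCo : IsOpen C) (hCc : IsClosed C) (hCne : C.Nonempty)
    (hinv : ∀ (k : ℤ) (y : Y), y ∈ C → translateS hY k y ∈ C) : C = Set.univ := by
  by_contra hne
  have hex : ∃ y' : Y, y' ∉ C := by
    by_contra h; push_neg at h; exact hne (Set.eq_univ_of_forall h)
  obtain ⟨y', hy'⟩ := hex
  obtain ⟨y, hy⟩ := hCne
  obtain ⟨n, hn⟩ := open_cylinder hCo hy
  obtain ⟨n', hn'⟩ := open_cylinder hCc.isOpen_compl hy'
  obtain ⟨w, zz, hzz, k, hocc⟩ := hYirr (centralWord n (y : ℤ → B))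
    (centralWord n' (y' : ℤ → B)) (wordIn_centralWord y.2 n) (wordIn_centralWord y'.2 n')
  have occ_u : OccursAt zz k (centralWord n (y : ℤ → B)) :=
    occursAt_append_left (occursAt_append_left hocc)
  have occ_v : OccursAt zz (k + (((centralWord n (y : ℤ → B) ++ w).length : ℕ) : ℤ))
      (centralWord n' (y' : ℤ → B)) := occursAt_append_right hocc
  set L : ℤ := (((centralWord n (y : ℤ → B) ++ w).length : ℕ) : ℤ) with hL
  set z₁ : Y := ⟨translate (k + n) zz, translate_mem hY _ hzz⟩ with hz1def
  have hz₁ : z₁ ∈ C := hn z₁ (occurs_translate occ_u)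
  set z₂ : Y := ⟨translate (k + L + n') zz, translate_mem hY _ hzz⟩ with hz2def
  have hz₂ : z₂ ∉ C := hn' z₂ (occurs_translate occ_v)
  apply hz₂
  have heq : z₂ = translateS hY (L + n' - n) z₁ := by
    apply Subtype.ext
    rw [translateS_val, hz1def, hz2def, translate_translate]
    show translate (k + L + n') zz = translate (L + (n':ℤ) - n + (k + n)) zz
    congr 1
    ring
  rw [heq]
  exact hinv _ _ hz₁

end CTO

theorem open_biclosing_is_constant_to_one {A : Type*} {B : Type*} [Finite A] [TopologicalSpace A] [DiscreteTopology A]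
    [Finite B] [TopologicalSpace B] [DiscreteTopology B]
    {X : Set (ℤ → A)} {Y : Set (ℤ → B)} (hX : IsSubshift X) (hY : IsSubshift Y)
    (φ : X → Y) (hφ : IsCode φ)
    (hopen : IsOpenMap φ) (hbc : BiClosing φ) (hYirr : IrreducibleSubshift Y) :
    ConstantToOne φ := by

  classical
  obtain ⟨M, hsep'⟩ := CTO.exists_sep hX hY hφ hbc
  have hsep : CTO.SepAt φ M := hsep'
  have hfin : ∀ y : Y, (φ ⁻¹' {y}).Finite := CTO.fiber_finite hsep
  by_cases hXe : Nonempty X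
  · obtain ⟨x₀⟩ := hXe
    set y₀ := φ x₀ with hy₀
    set d := Nat.card (φ ⁻¹' {y₀}) with hd
    have hmemfib : ∀ (y : Y) (m : ℕ), m ≤ Nat.card (φ ⁻¹' {y}) → y ∈ CTO.fibSet φ m := by
      intro y m hm
      haveI : Finite ↥(φ ⁻¹' {y}) := (hfin y).to_subtype
      set e := Finite.equivFinOfCardEq (rfl : Nat.card ↥(φ ⁻¹' {y}) = _) with he
      refine ⟨fun j => (e.symm (Fin.castLE hm j) : X), ?_, ?_⟩
      · intro j j' h
        have h1 : e.symm (Fin.castLE hm j) = e.symm (Fin.castLE hm j') := Subtype.ext h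
        have h2 := e.symm.injective h1
        exact Fin.castLE_injective hm h2
      · intro j
        exact (e.symm (Fin.castLE hm j)).2
    have hcard_ge : ∀ (y : Y) (m : ℕ), y ∈ CTO.fibSet φ m → m ≤ Nat.card (φ ⁻¹' {y}) := by
      rintro y m ⟨f, hinj, hf⟩
      haveI : Finite ↥(φ ⁻¹' {y}) := (hfin y).to_subtype
      have hinj2 : Function.Injective (fun j : Fin m => (⟨f j, hf j⟩ : ↥(φ ⁻¹' {y}))) :=
        fun j j' h => hinj (congrArg Subtype.val h)
      have := Nat.card_le_card_of_injective _ hinj2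
      rwa [Nat.card_fin] at this
    have huniv : ∀ m : ℕ, (CTO.fibSet φ m).Nonempty → CTO.fibSet φ m = Set.univ := by
      intro m hne
      exact CTO.clopen_inv_univ hY hYirr (CTO.fibSet_isOpen hopen hsep m)
        (CTO.fibSet_isClosed hX hY hsep hφ.1 m) hne
        (fun k y hy => CTO.fibSet_translate hX hY hφ m k hy)
    refine ⟨d, fun y => ⟨hfin y, ?_⟩⟩
    have h1 : y₀ ∈ CTO.fibSet φ d := hmemfib y₀ d le_rfl
    have h2 : CTO.fibSet φ d = Set.univ := huniv d ⟨y₀, h1⟩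
    have hge : d ≤ Nat.card (φ ⁻¹' {y}) := hcard_ge y d (h2 ▸ Set.mem_univ y)
    rcases eq_or_lt_of_le hge with h | h
    · exact h.symm
    · exfalso
      have hmem : y ∈ CTO.fibSet φ (d + 1) := hmemfib y (d + 1) h
      have := hcard_ge y₀ (d + 1) ((huniv (d + 1) ⟨y, hmem⟩) ▸ Set.mem_univ y₀)
      omega
  · refine ⟨0, fun y => ?_⟩
    haveI : IsEmpty X := not_nonempty_iff.mp hXe
    haveI : IsEmpty ↥(φ ⁻¹' {y}) := ⟨fun x => IsEmpty.false (x : X)⟩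
    exact ⟨Set.toFinite _, Nat.card_of_isEmpty⟩
end
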